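/- arXiv:1111.3145 — 4 statements merged into one kernel-verified Lean document; each statement's English description precedes it below -/
import Mathlib

section
/- For any ν > -1/2 and all z ≥ 0, the integral ∫_{-1}^{1} exp(z·s) (Γ(ν+1)/(√π Γ(ν+1/2))) (1-s²)^{ν-1/2} ds is comparable to (1+z)^{-ν-1/2} e^z; that is, there exist positive constants c, C depending only on ν such that c·(1+z)^{-ν-1/2} e^z ≤ ∫_{-1}^1 e^{zs} dΠ_ν(s) ≤ C·(1+z)^{-ν-1/2} e^z for all z ≥ 0. -/
open Real MeasureTheory Set

namespace Stmt0Aux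

lemma ii_one_sub {μ : ℝ} (hμ : -1 < μ) (a b : ℝ) :
    IntervalIntegrable (fun s : ℝ => (1 - s) ^ μ) volume a b := by
  have h := (intervalIntegral.intervalIntegrable_rpow' (a := 1 - a) (b := 1 - b)
    hμ).comp_sub_left 1
  simpa using h

lemma ii_one_add {μ : ℝ} (hμ : -1 < μ) (a b : ℝ) :
    IntervalIntegrable (fun s : ℝ => (1 + s) ^ μ) volume a b := by
  have h := (intervalIntegral.intervalIntegrable_rpow' (a := a + 1) (b := b + 1)
    hμ).comp_sub_right (-1)
  simpa [sub_neg_eq_add, add_comm] using h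

lemma le_max_pow (μ : ℝ) {x : ℝ} (h1 : 1 ≤ x) (h2 : x ≤ 2) :
    x ^ μ ≤ max 1 ((2:ℝ) ^ μ) := by
  rcases le_or_gt 0 μ with h | h
  · exact le_max_of_le_right (Real.rpow_le_rpow (by linarith) h2 h)
  · exact le_max_of_le_left (Real.rpow_le_one_of_one_le_of_nonpos h1 h.le)

lemma min_le_pow (μ : ℝ) {x : ℝ} (h1 : 1 ≤ x) (h2 : x ≤ 2) :
    min 1 ((2:ℝ) ^ μ) ≤ x ^ μ := by
  rcases le_or_gt 0 μ with h | h
  · exact le_trans (min_le_left _ _) (Real.one_le_rpow h1 h)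
  · exact le_trans (min_le_right _ _) (Real.rpow_le_rpow_of_nonpos (by linarith) h2 h.le)

lemma pw_bound (μ : ℝ) {s : ℝ} (hs : s ∈ Icc (-1:ℝ) 1) :
    (1 - s ^ 2) ^ μ ≤ max 1 ((2:ℝ) ^ μ) * ((1 - s) ^ μ + (1 + s) ^ μ) := by
  obtain ⟨h1, h2⟩ := hs
  have e : (1 - s ^ 2 : ℝ) = (1 - s) * (1 + s) := by ring
  have h1s : (0:ℝ) ≤ 1 - s := by linarith
  have h2s : (0:ℝ) ≤ 1 + s := by linarith
  have hr1 : (0:ℝ) ≤ (1 - s) ^ μ := Real.rpow_nonneg h1s μ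
  have hr2 : (0:ℝ) ≤ (1 + s) ^ μ := Real.rpow_nonneg h2s μ
  have hM0 : (0:ℝ) ≤ max 1 ((2:ℝ) ^ μ) := le_trans zero_le_one (le_max_left _ _)
  rw [e, Real.mul_rpow h1s h2s]
  rcases le_or_gt 0 s with h | h
  · have hb : (1 + s) ^ μ ≤ max 1 ((2:ℝ) ^ μ) := le_max_pow μ (by linarith) (by linarith)
    nlinarith
  · have hb : (1 - s) ^ μ ≤ max 1 ((2:ℝ) ^ μ) := le_max_pow μ (by linarith) (by linarith)
    nlinarith

lemma integrableOn_f {μ : ℝ} (hμ : -1 < μ) (z : ℝ) :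
    IntegrableOn (fun s => Real.exp (z * s) * (1 - s ^ 2) ^ μ) (Icc (-1:ℝ) 1) := by
  have hg : IntegrableOn
      (fun s => Real.exp |z| * (max 1 ((2:ℝ) ^ μ) * ((1 - s) ^ μ + (1 + s) ^ μ)))
      (Icc (-1:ℝ) 1) := by
    rw [integrableOn_Icc_iff_integrableOn_Ioc]
    have h3 : IntegrableOn (fun s => (1 - s) ^ μ + (1 + s) ^ μ) (Ioc (-1:ℝ) 1) :=
      (intervalIntegrable_iff_integrableOn_Ioc_of_le (by norm_num)).mp
        ((ii_one_sub hμ (-1) 1).add (ii_one_add hμ (-1) 1))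
    exact (h3.const_mul _).const_mul _
  apply Integrable.mono' hg
  · apply Measurable.aestronglyMeasurable
    have : Measurable (fun s : ℝ => Real.exp (z * s) * (1 - s ^ 2) ^ μ) := by fun_prop
    exact this
  · filter_upwards [self_mem_ae_restrict measurableSet_Icc] with s hs
    have hs2 : s ^ 2 ≤ 1 := by nlinarith [hs.1, hs.2]
    have hw : (0:ℝ) ≤ (1 - s ^ 2) ^ μ := Real.rpow_nonneg (by linarith) μ
    rw [Real.norm_eq_abs, abs_mul, abs_of_pos (Real.exp_pos _), abs_of_nonneg hw]
    have he : Real.exp (z * s) ≤ Real.exp |z| := by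
      apply Real.exp_le_exp.mpr
      calc z * s ≤ |z * s| := le_abs_self _
        _ = |z| * |s| := abs_mul _ _
        _ ≤ |z| * 1 := by
            apply mul_le_mul_of_nonneg_left _ (abs_nonneg z)
            exact abs_le.mpr ⟨hs.1, hs.2⟩
        _ = |z| := mul_one _
    calc Real.exp (z * s) * (1 - s ^ 2) ^ μ
        ≤ Real.exp |z| * (1 - s ^ 2) ^ μ := mul_le_mul_of_nonneg_right he hw
      _ ≤ Real.exp |z| * (max 1 ((2:ℝ) ^ μ) * ((1 - s) ^ μ + (1 + s) ^ μ)) :=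
          mul_le_mul_of_nonneg_left (pw_bound μ hs) (Real.exp_pos _).le

lemma integral_Icc_one_sub {μ : ℝ} (hμ : -1 < μ) {δ : ℝ} (hδ : 0 ≤ δ) :
    ∫ s in Icc (1 - δ) 1, (1 - s) ^ μ = δ ^ (μ + 1) / (μ + 1) := by
  rw [integral_Icc_eq_integral_Ioc, ← intervalIntegral.integral_of_le (by linarith)]
  have h := intervalIntegral.integral_comp_sub_left (a := 1 - δ) (b := 1)
    (fun x : ℝ => x ^ μ) 1
  rw [h, sub_self, sub_sub_cancel, integral_rpow (Or.inl hμ),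
    Real.zero_rpow (by linarith : μ + 1 ≠ 0), sub_zero]

lemma poly_le_exp {p : ℝ} (hp : 0 < p) {z : ℝ} (hz : 0 ≤ z) :
    (1 + z) ^ p ≤ (1 + 2 * p) ^ p * Real.exp z := by
  have hd : (0:ℝ) ≤ z / (2 * p) := div_nonneg hz (by linarith)
  have h1 : (1:ℝ) + z ≤ (1 + 2 * p) * Real.exp (z / (2 * p)) := by
    have h2 : z / (2 * p) + 1 ≤ Real.exp (z / (2 * p)) := Real.add_one_le_exp _
    have h3 : (1 + 2 * p) * (z / (2 * p) + 1) ≤ (1 + 2 * p) * Real.exp (z / (2 * p)) :=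
      mul_le_mul_of_nonneg_left h2 (by linarith)
    refine le_trans ?_ h3
    have he : (1 + 2 * p) * (z / (2 * p) + 1) = 1 + 2 * p + z + z / (2 * p) := by
      field_simp; ring
    nlinarith
  have hhalf : z / (2 * p) * p = z / 2 := by field_simp
  calc (1 + z) ^ p ≤ ((1 + 2 * p) * Real.exp (z / (2 * p))) ^ p :=
        Real.rpow_le_rpow (by linarith) h1 hp.le
    _ = (1 + 2 * p) ^ p * Real.exp (z / (2 * p)) ^ p :=
        Real.mul_rpow (by linarith) (Real.exp_pos _).le
    _ = (1 + 2 * p) ^ p * Real.exp (z / (2 * p) * p) := by rw [← Real.exp_mul]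
    _ ≤ (1 + 2 * p) ^ p * Real.exp z := by
        apply mul_le_mul_of_nonneg_left _ (Real.rpow_nonneg (by linarith) p)
        rw [hhalf]
        exact Real.exp_le_exp.mpr (by linarith)


lemma lower_bound {μ : ℝ} (hμ : -1 < μ) {z : ℝ} (hz : 0 ≤ z) :
    (Real.exp (-1) * min 1 ((2:ℝ) ^ μ) / (μ + 1)) * (1 + z) ^ (-(μ + 1)) * Real.exp z ≤
      ∫ s in Icc (-1:ℝ) 1, Real.exp (z * s) * (1 - s ^ 2) ^ μ := by
  set δ : ℝ := (1 + z)⁻¹ with hδdef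
  have hz1 : (0:ℝ) < 1 + z := by linarith
  have hδ0 : 0 < δ := inv_pos.mpr hz1
  have hδ1 : δ ≤ 1 := by
    rw [hδdef]
    have h := mul_le_mul_of_nonneg_right (show (1:ℝ) ≤ 1 + z by linarith)
      (inv_nonneg.mpr hz1.le)
    rwa [one_mul, mul_inv_cancel₀ hz1.ne'] at h
  set cm : ℝ := Real.exp z * Real.exp (-1) * min 1 ((2:ℝ) ^ μ) with hcm
  have hmin0 : (0:ℝ) ≤ min 1 ((2:ℝ) ^ μ) :=
    le_min zero_le_one (Real.rpow_nonneg (by norm_num) μ)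
  have step2 : ∫ s in Icc (1 - δ) 1, cm * (1 - s) ^ μ ≤
      ∫ s in Icc (1 - δ) 1, Real.exp (z * s) * (1 - s ^ 2) ^ μ := by
    apply setIntegral_mono_on
    · rw [integrableOn_Icc_iff_integrableOn_Ioc]
      exact (intervalIntegrable_iff_integrableOn_Ioc_of_le (by linarith)).mp
        ((ii_one_sub hμ _ _).const_mul cm)
    · exact (integrableOn_f hμ z).mono_set (Icc_subset_Icc (by linarith) le_rfl)
    · exact measurableSet_Icc
    · intro s hs
      obtain ⟨ha, hb⟩ := hs
      have hs0 : 0 ≤ s := by linarith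
      have h1s : (0:ℝ) ≤ 1 - s := by linarith
      have h2s : (1:ℝ) ≤ 1 + s := by linarith
      have e : (1 - s ^ 2 : ℝ) = (1 - s) * (1 + s) := by ring
      have hge : min 1 ((2:ℝ) ^ μ) * (1 - s) ^ μ ≤ (1 - s ^ 2) ^ μ := by
        rw [e, Real.mul_rpow h1s (by linarith)]
        calc min 1 ((2:ℝ) ^ μ) * (1 - s) ^ μ ≤ (1 + s) ^ μ * (1 - s) ^ μ :=
              mul_le_mul_of_nonneg_right (min_le_pow μ h2s (by linarith))
                (Real.rpow_nonneg h1s μ)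
          _ = (1 - s) ^ μ * (1 + s) ^ μ := mul_comm _ _
      have hexp : Real.exp z * Real.exp (-1) ≤ Real.exp (z * s) := by
        rw [← Real.exp_add]
        apply Real.exp_le_exp.mpr
        have h4 : z * δ ≤ 1 := by
          rw [hδdef]
          have h := mul_le_mul_of_nonneg_right (show z ≤ 1 + z by linarith)
            (inv_nonneg.mpr hz1.le)
          rwa [mul_inv_cancel₀ hz1.ne'] at h
        have h5 : z * (1 - δ) ≤ z * s := mul_le_mul_of_nonneg_left ha hz
        nlinarith
      calc cm * (1 - s) ^ μ
          = (Real.exp z * Real.exp (-1)) * (min 1 ((2:ℝ) ^ μ) * (1 - s) ^ μ) := by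
            rw [hcm]; ring
        _ ≤ Real.exp (z * s) * (1 - s ^ 2) ^ μ :=
            mul_le_mul hexp hge (mul_nonneg hmin0 (Real.rpow_nonneg h1s μ))
              (Real.exp_pos _).le
  have step1 : ∫ s in Icc (1 - δ) 1, Real.exp (z * s) * (1 - s ^ 2) ^ μ ≤
      ∫ s in Icc (-1:ℝ) 1, Real.exp (z * s) * (1 - s ^ 2) ^ μ := by
    apply setIntegral_mono_set (integrableOn_f hμ z)
    · filter_upwards [self_mem_ae_restrict measurableSet_Icc] with s hs
      have : s ^ 2 ≤ 1 := by nlinarith [hs.1, hs.2]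
      exact mul_nonneg (Real.exp_pos _).le (Real.rpow_nonneg (by linarith) μ)
    · exact (Icc_subset_Icc (by linarith) le_rfl).eventuallyLE
  have hval : ∫ s in Icc (1 - δ) 1, cm * (1 - s) ^ μ = cm * (δ ^ (μ + 1) / (μ + 1)) := by
    rw [MeasureTheory.integral_const_mul, integral_Icc_one_sub hμ hδ0.le]
  have hpow : δ ^ (μ + 1) = (1 + z) ^ (-(μ + 1)) := by
    rw [hδdef, Real.inv_rpow hz1.le, ← Real.rpow_neg hz1.le]
  calc (Real.exp (-1) * min 1 ((2:ℝ) ^ μ) / (μ + 1)) * (1 + z) ^ (-(μ + 1)) * Real.exp z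
      = cm * (δ ^ (μ + 1) / (μ + 1)) := by rw [hcm, hpow]; ring
    _ = ∫ s in Icc (1 - δ) 1, cm * (1 - s) ^ μ := hval.symm
    _ ≤ ∫ s in Icc (1 - δ) 1, Real.exp (z * s) * (1 - s ^ 2) ^ μ := step2
    _ ≤ ∫ s in Icc (-1:ℝ) 1, Real.exp (z * s) * (1 - s ^ 2) ^ μ := step1

lemma integrableOn_w {μ : ℝ} (hμ : -1 < μ) :
    IntegrableOn (fun s : ℝ => (1 - s ^ 2) ^ μ) (Icc (-1:ℝ) 1) := by
  have h := integrableOn_f hμ 0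
  simpa using h

lemma A_nonneg {μ : ℝ} : 0 ≤ ∫ s in Icc (-1:ℝ) 1, (1 - s ^ 2) ^ μ := by
  apply setIntegral_nonneg measurableSet_Icc
  intro s hs
  have : s ^ 2 ≤ 1 := by nlinarith [hs.1, hs.2]
  exact Real.rpow_nonneg (by linarith) μ

lemma upper_small {μ : ℝ} (hμ : -1 < μ) {z : ℝ} (hz0 : 0 ≤ z) (hz1 : z ≤ 1) :
    ∫ s in Icc (-1:ℝ) 1, Real.exp (z * s) * (1 - s ^ 2) ^ μ ≤
      (Real.exp 1 * (∫ s in Icc (-1:ℝ) 1, (1 - s ^ 2) ^ μ) * (2:ℝ) ^ (μ + 1)) *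
        (1 + z) ^ (-(μ + 1)) * Real.exp z := by
  set A : ℝ := ∫ s in Icc (-1:ℝ) 1, (1 - s ^ 2) ^ μ with hA
  have hA0 : 0 ≤ A := A_nonneg
  have h1 : ∫ s in Icc (-1:ℝ) 1, Real.exp (z * s) * (1 - s ^ 2) ^ μ ≤
      ∫ s in Icc (-1:ℝ) 1, Real.exp 1 * (1 - s ^ 2) ^ μ := by
    apply setIntegral_mono_on (integrableOn_f hμ z) ((integrableOn_w hμ).const_mul _)
      measurableSet_Icc
    intro s hs
    have hs2 : s ^ 2 ≤ 1 := by nlinarith [hs.1, hs.2]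
    apply mul_le_mul_of_nonneg_right _ (Real.rpow_nonneg (by linarith) μ)
    apply Real.exp_le_exp.mpr
    nlinarith [hs.1, hs.2]
  rw [MeasureTheory.integral_const_mul] at h1
  have hQP : (1:ℝ) ≤ (2:ℝ) ^ (μ + 1) * (1 + z) ^ (-(μ + 1)) := by
    have ha : (2:ℝ) ^ (-(μ + 1)) ≤ (1 + z) ^ (-(μ + 1)) :=
      Real.rpow_le_rpow_of_nonpos (by linarith) (by linarith) (by linarith)
    have hb : (2:ℝ) ^ (μ + 1) * (2:ℝ) ^ (-(μ + 1)) = 1 := by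
      rw [← Real.rpow_add (by norm_num), show (μ + 1) + -(μ + 1) = 0 by ring,
        Real.rpow_zero]
    calc (1:ℝ) = (2:ℝ) ^ (μ + 1) * (2:ℝ) ^ (-(μ + 1)) := hb.symm
      _ ≤ (2:ℝ) ^ (μ + 1) * (1 + z) ^ (-(μ + 1)) :=
          mul_le_mul_of_nonneg_left ha (Real.rpow_nonneg (by norm_num) _)
  have he1 : (1:ℝ) ≤ Real.exp z := Real.one_le_exp hz0
  calc ∫ s in Icc (-1:ℝ) 1, Real.exp (z * s) * (1 - s ^ 2) ^ μ
      ≤ Real.exp 1 * A := h1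
    _ = (Real.exp 1 * A) * 1 * 1 := by ring
    _ ≤ (Real.exp 1 * A) * ((2:ℝ) ^ (μ + 1) * (1 + z) ^ (-(μ + 1))) * Real.exp z := by
        have hEA : (0:ℝ) ≤ Real.exp 1 * A := mul_nonneg (Real.exp_pos _).le hA0
        have hQP0 : (0:ℝ) ≤ (2:ℝ) ^ (μ + 1) * (1 + z) ^ (-(μ + 1)) :=
          mul_nonneg (Real.rpow_nonneg (by norm_num) _)
            (Real.rpow_nonneg (by linarith) _)
        apply mul_le_mul _ he1 zero_le_one (mul_nonneg hEA hQP0)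
        exact mul_le_mul_of_nonneg_left hQP hEA
    _ = (Real.exp 1 * A * (2:ℝ) ^ (μ + 1)) * (1 + z) ^ (-(μ + 1)) * Real.exp z := by ring

lemma upper_large {μ : ℝ} (hμ : -1 < μ) {z : ℝ} (hz : 1 ≤ z) :
    ∫ s in Icc (-1:ℝ) 1, Real.exp (z * s) * (1 - s ^ 2) ^ μ ≤
      ((∫ s in Icc (-1:ℝ) 1, (1 - s ^ 2) ^ μ) * (1 + 2 * (μ + 1)) ^ (μ + 1)
        + max 1 ((2:ℝ) ^ μ) * Real.Gamma (μ + 1) * (2:ℝ) ^ (μ + 1)) *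
        (1 + z) ^ (-(μ + 1)) * Real.exp z := by
  have hz0 : (0:ℝ) < z := by linarith
  have hp : (0:ℝ) < μ + 1 := by linarith
  set A : ℝ := ∫ s in Icc (-1:ℝ) 1, (1 - s ^ 2) ^ μ with hA
  have hA0 : 0 ≤ A := A_nonneg
  set M : ℝ := max 1 ((2:ℝ) ^ μ) with hM
  have hM0 : (0:ℝ) ≤ M := le_trans zero_le_one (le_max_left _ _)
  have hiiL : IntervalIntegrable (fun s => Real.exp (z * s) * (1 - s ^ 2) ^ μ)
      volume (-1) 0 :=
    (intervalIntegrable_iff_integrableOn_Ioc_of_le (by norm_num)).mpr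
      ((integrableOn_f hμ z).mono_set
        (fun x hx => ⟨hx.1.le, by linarith [hx.2]⟩))
  have hiiR : IntervalIntegrable (fun s => Real.exp (z * s) * (1 - s ^ 2) ^ μ)
      volume 0 1 :=
    (intervalIntegrable_iff_integrableOn_Ioc_of_le (by norm_num)).mpr
      ((integrableOn_f hμ z).mono_set
        (fun x hx => ⟨by linarith [hx.1], hx.2⟩))
  have hsplit : ∫ s in Icc (-1:ℝ) 1, Real.exp (z * s) * (1 - s ^ 2) ^ μ =
      (∫ s in (-1:ℝ)..0, Real.exp (z * s) * (1 - s ^ 2) ^ μ) +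
        ∫ s in (0:ℝ)..1, Real.exp (z * s) * (1 - s ^ 2) ^ μ := by
    rw [MeasureTheory.integral_Icc_eq_integral_Ioc,
      ← intervalIntegral.integral_of_le (by norm_num : (-1:ℝ) ≤ 1)]
    exact (intervalIntegral.integral_add_adjacent_intervals hiiL hiiR).symm
  -- bound on [-1,0]
  have hwiiL : IntervalIntegrable (fun s : ℝ => (1 - s ^ 2) ^ μ) volume (-1) 0 :=
    (intervalIntegrable_iff_integrableOn_Ioc_of_le (by norm_num)).mpr
      ((integrableOn_w hμ).mono_set (fun x hx => ⟨hx.1.le, by linarith [hx.2]⟩))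
  have hI1 : ∫ s in (-1:ℝ)..0, Real.exp (z * s) * (1 - s ^ 2) ^ μ ≤ A := by
    have h1 : ∫ s in (-1:ℝ)..0, Real.exp (z * s) * (1 - s ^ 2) ^ μ ≤
        ∫ s in (-1:ℝ)..0, (1 - s ^ 2) ^ μ := by
      apply intervalIntegral.integral_mono_on (by norm_num) hiiL hwiiL
      intro s hs
      have hs2 : s ^ 2 ≤ 1 := by nlinarith [hs.1, hs.2]
      have hzs : z * s ≤ 0 := by nlinarith [hs.2]
      calc Real.exp (z * s) * (1 - s ^ 2) ^ μ
          ≤ 1 * (1 - s ^ 2) ^ μ := by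
            apply mul_le_mul_of_nonneg_right _ (Real.rpow_nonneg (by linarith) μ)
            simpa using Real.exp_le_exp.mpr hzs
        _ = (1 - s ^ 2) ^ μ := one_mul _
    have h2 : ∫ s in (-1:ℝ)..0, (1 - s ^ 2) ^ μ ≤ A := by
      rw [intervalIntegral.integral_of_le (by norm_num : (-1:ℝ) ≤ 0)]
      apply setIntegral_mono_set (integrableOn_w hμ)
      · filter_upwards [self_mem_ae_restrict measurableSet_Icc] with s hs
        have : s ^ 2 ≤ 1 := by nlinarith [hs.1, hs.2]
        exact Real.rpow_nonneg (by linarith) μ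
      · have hsub : Ioc (-1:ℝ) 0 ⊆ Icc (-1:ℝ) 1 := fun x hx => ⟨hx.1.le, by linarith [hx.2]⟩
        exact hsub.eventuallyLE
    linarith
  have hAb : A ≤ (A * (1 + 2 * (μ + 1)) ^ (μ + 1)) * (1 + z) ^ (-(μ + 1)) * Real.exp z := by
    have hple := poly_le_exp hp (show (0:ℝ) ≤ z by linarith)
    have hP : (0:ℝ) < (1 + z) ^ (μ + 1) := Real.rpow_pos_of_pos (by linarith) _
    have hmul : (1 + z) ^ (μ + 1) *
        ((1 + 2 * (μ + 1)) ^ (μ + 1) * (1 + z) ^ (-(μ + 1)) * Real.exp z) =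
        (1 + 2 * (μ + 1)) ^ (μ + 1) * Real.exp z := by
      rw [Real.rpow_neg (by linarith : (0:ℝ) ≤ 1 + z)]
      field_simp
    have h1 : (1:ℝ) ≤ (1 + 2 * (μ + 1)) ^ (μ + 1) * (1 + z) ^ (-(μ + 1)) * Real.exp z := by
      have := hple
      apply le_of_mul_le_mul_left _ hP
      rw [hmul, mul_one]
      exact hple
    calc A = A * 1 := (mul_one A).symm
      _ ≤ A * ((1 + 2 * (μ + 1)) ^ (μ + 1) * (1 + z) ^ (-(μ + 1)) * Real.exp z) :=
          mul_le_mul_of_nonneg_left h1 hA0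
      _ = (A * (1 + 2 * (μ + 1)) ^ (μ + 1)) * (1 + z) ^ (-(μ + 1)) * Real.exp z := by ring
  -- bound on [0,1]
  have hgii : IntervalIntegrable (fun s : ℝ => Real.exp (z * s) * (1 - s) ^ μ)
      volume 0 1 :=
    (ii_one_sub hμ 0 1).continuousOn_mul (Continuous.continuousOn (by fun_prop))
  have ha : ∫ s in (0:ℝ)..1, Real.exp (z * s) * (1 - s ^ 2) ^ μ ≤
      ∫ s in (0:ℝ)..1, M * (Real.exp (z * s) * (1 - s) ^ μ) := by
    apply intervalIntegral.integral_mono_on zero_le_one hiiR (hgii.const_mul M)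
    intro s hs
    have h1s : (0:ℝ) ≤ 1 - s := by linarith [hs.2]
    have h2s : (0:ℝ) ≤ 1 + s := by linarith [hs.1]
    have e : (1 - s ^ 2 : ℝ) = (1 - s) * (1 + s) := by ring
    rw [e, Real.mul_rpow h1s h2s]
    have hb : (1 + s) ^ μ ≤ M := le_max_pow μ (by linarith [hs.1]) (by linarith [hs.2])
    calc Real.exp (z * s) * ((1 - s) ^ μ * (1 + s) ^ μ)
        ≤ Real.exp (z * s) * ((1 - s) ^ μ * M) := by
          apply mul_le_mul_of_nonneg_left _ (Real.exp_pos _).le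
          exact mul_le_mul_of_nonneg_left hb (Real.rpow_nonneg h1s μ)
      _ = M * (Real.exp (z * s) * (1 - s) ^ μ) := by ring
  have hb : ∫ s in (0:ℝ)..1, Real.exp (z * s) * (1 - s) ^ μ
      = Real.exp z * ∫ t in (0:ℝ)..1, t ^ μ * Real.exp (-(z * t)) := by
    calc ∫ s in (0:ℝ)..1, Real.exp (z * s) * (1 - s) ^ μ
        = ∫ s in (0:ℝ)..1, (fun t : ℝ => Real.exp (z * (1 - t)) * t ^ μ) (1 - s) := by
          apply intervalIntegral.integral_congr
          intro s _
          simp only [sub_sub_cancel]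
      _ = ∫ t in (1-(1:ℝ))..(1-(0:ℝ)), Real.exp (z * (1 - t)) * t ^ μ :=
          intervalIntegral.integral_comp_sub_left (a := 0) (b := 1)
            (fun t : ℝ => Real.exp (z * (1 - t)) * t ^ μ) 1
      _ = ∫ t in (0:ℝ)..1, Real.exp (z * (1 - t)) * t ^ μ := by norm_num
      _ = ∫ t in (0:ℝ)..1, Real.exp z * (t ^ μ * Real.exp (-(z * t))) := by
          apply intervalIntegral.integral_congr
          intro t _
          beta_reduce
          rw [show z * (1 - t) = z + -(z * t) by ring, Real.exp_add]
          ring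
      _ = Real.exp z * ∫ t in (0:ℝ)..1, t ^ μ * Real.exp (-(z * t)) :=
          intervalIntegral.integral_const_mul _ _
  have hIoi : IntegrableOn (fun t : ℝ => t ^ μ * Real.exp (-(z * t))) (Ioi 0) := by
    have h := integrableOn_rpow_mul_exp_neg_mul_rpow (p := 1) hμ one_pos hz0
    simpa [Real.rpow_one, neg_mul] using h
  have hc : ∫ t in (0:ℝ)..1, t ^ μ * Real.exp (-(z * t)) ≤
      (1 / z) ^ (μ + 1) * Real.Gamma (μ + 1) := by
    rw [intervalIntegral.integral_of_le zero_le_one]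
    have hval := Real.integral_rpow_mul_exp_neg_mul_Ioi (a := μ + 1) (r := z) hp hz0
    simp only [add_sub_cancel_right] at hval
    calc ∫ t in Ioc (0:ℝ) 1, t ^ μ * Real.exp (-(z * t))
        ≤ ∫ t in Ioi (0:ℝ), t ^ μ * Real.exp (-(z * t)) := by
          apply setIntegral_mono_set hIoi
          · filter_upwards [self_mem_ae_restrict measurableSet_Ioi] with t ht
            exact mul_nonneg (Real.rpow_nonneg (le_of_lt ht) μ) (Real.exp_pos _).le
          · exact (Ioc_subset_Ioi_self).eventuallyLE
      _ = (1 / z) ^ (μ + 1) * Real.Gamma (μ + 1) := hval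
  have hd : (1 / z) ^ (μ + 1) ≤ (2:ℝ) ^ (μ + 1) * (1 + z) ^ (-(μ + 1)) := by
    have h1 : (1:ℝ) / z ≤ 2 / (1 + z) := by
      rw [div_le_div_iff₀ hz0 (by linarith)]; linarith
    calc (1 / z) ^ (μ + 1) ≤ (2 / (1 + z)) ^ (μ + 1) :=
        Real.rpow_le_rpow (by positivity) h1 (by linarith)
      _ = (2:ℝ) ^ (μ + 1) * (1 + z) ^ (-(μ + 1)) := by
          rw [Real.div_rpow (by norm_num) (by linarith),
            Real.rpow_neg (by linarith : (0:ℝ) ≤ 1 + z), div_eq_mul_inv]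
  have hΓ0 : (0:ℝ) ≤ Real.Gamma (μ + 1) := (Real.Gamma_pos_of_pos hp).le
  have hI2 : ∫ s in (0:ℝ)..1, Real.exp (z * s) * (1 - s ^ 2) ^ μ ≤
      (M * Real.Gamma (μ + 1) * (2:ℝ) ^ (μ + 1)) * (1 + z) ^ (-(μ + 1)) * Real.exp z := by
    have h2 : ∫ s in (0:ℝ)..1, M * (Real.exp (z * s) * (1 - s) ^ μ) =
        M * (Real.exp z * ∫ t in (0:ℝ)..1, t ^ μ * Real.exp (-(z * t))) := by
      rw [intervalIntegral.integral_const_mul, hb]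
    have h3 : M * (Real.exp z * ∫ t in (0:ℝ)..1, t ^ μ * Real.exp (-(z * t))) ≤
        M * (Real.exp z * ((1 / z) ^ (μ + 1) * Real.Gamma (μ + 1))) := by
      apply mul_le_mul_of_nonneg_left _ hM0
      exact mul_le_mul_of_nonneg_left hc (Real.exp_pos _).le
    have h4 : M * (Real.exp z * ((1 / z) ^ (μ + 1) * Real.Gamma (μ + 1))) ≤
        M * (Real.exp z * (((2:ℝ) ^ (μ + 1) * (1 + z) ^ (-(μ + 1))) * Real.Gamma (μ + 1))) := by
      apply mul_le_mul_of_nonneg_left _ hM0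
      apply mul_le_mul_of_nonneg_left _ (Real.exp_pos _).le
      exact mul_le_mul_of_nonneg_right hd hΓ0
    calc ∫ s in (0:ℝ)..1, Real.exp (z * s) * (1 - s ^ 2) ^ μ
        ≤ ∫ s in (0:ℝ)..1, M * (Real.exp (z * s) * (1 - s) ^ μ) := ha
      _ = M * (Real.exp z * ∫ t in (0:ℝ)..1, t ^ μ * Real.exp (-(z * t))) := h2
      _ ≤ M * (Real.exp z * ((1 / z) ^ (μ + 1) * Real.Gamma (μ + 1))) := h3
      _ ≤ M * (Real.exp z * (((2:ℝ) ^ (μ + 1) * (1 + z) ^ (-(μ + 1))) * Real.Gamma (μ + 1))) := h4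
      _ = (M * Real.Gamma (μ + 1) * (2:ℝ) ^ (μ + 1)) * (1 + z) ^ (-(μ + 1)) * Real.exp z := by
          ring
  rw [hsplit]
  calc (∫ s in (-1:ℝ)..0, Real.exp (z * s) * (1 - s ^ 2) ^ μ) +
        ∫ s in (0:ℝ)..1, Real.exp (z * s) * (1 - s ^ 2) ^ μ
      ≤ ((A * (1 + 2 * (μ + 1)) ^ (μ + 1)) * (1 + z) ^ (-(μ + 1)) * Real.exp z) +
        ((M * Real.Gamma (μ + 1) * (2:ℝ) ^ (μ + 1)) * (1 + z) ^ (-(μ + 1)) * Real.exp z) :=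
        add_le_add (le_trans hI1 hAb) hI2
    _ = (A * (1 + 2 * (μ + 1)) ^ (μ + 1)
        + M * Real.Gamma (μ + 1) * (2:ℝ) ^ (μ + 1)) * (1 + z) ^ (-(μ + 1)) * Real.exp z := by
        ring

end Stmt0Aux

open Stmt0Aux

/-- For ν > -1/2, the integral ∫_{-1}^1 e^{zs} dΠ_ν(s) is comparable to (1+z)^{-ν-1/2} e^z
for z ≥ 0, where dΠ_ν(s) = (Γ(ν+1)/(√π Γ(ν+1/2))) (1-s²)^{ν-1/2} ds on [-1,1]. -/
theorem stmt0 (ν : ℝ) (hν : -1/2 < ν) :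
    ∃ c C : ℝ, 0 < c ∧ 0 < C ∧ ∀ z : ℝ, 0 ≤ z →
      c * (1 + z) ^ (-ν - 1/2) * Real.exp z ≤
        (∫ s in Set.Icc (-1 : ℝ) 1,
          Real.exp (z * s) *
            (Real.Gamma (ν + 1) / (Real.sqrt π * Real.Gamma (ν + 1/2)) *
              (1 - s ^ 2) ^ (ν - 1/2))) ∧
      (∫ s in Set.Icc (-1 : ℝ) 1,
          Real.exp (z * s) *
            (Real.Gamma (ν + 1) / (Real.sqrt π * Real.Gamma (ν + 1/2)) *
              (1 - s ^ 2) ^ (ν - 1/2))) ≤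
        C * (1 + z) ^ (-ν - 1/2) * Real.exp z := by
  set μ : ℝ := ν - 1/2 with hμdef
  have hμ : -1 < μ := by rw [hμdef]; linarith
  set K : ℝ := Real.Gamma (ν + 1) / (Real.sqrt π * Real.Gamma (ν + 1/2)) with hK
  have hK0 : 0 < K := by
    apply div_pos (Real.Gamma_pos_of_pos (by linarith))
    exact mul_pos (Real.sqrt_pos.mpr Real.pi_pos) (Real.Gamma_pos_of_pos (by linarith))
  set A : ℝ := ∫ s in Set.Icc (-1:ℝ) 1, (1 - s ^ 2) ^ μ with hAdef
  have hA0 : 0 ≤ A := A_nonneg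
  set c₀ : ℝ := Real.exp (-1) * min 1 ((2:ℝ) ^ μ) / (μ + 1) with hc₀
  have hc₀0 : 0 < c₀ := by
    apply div_pos _ (by linarith)
    exact mul_pos (Real.exp_pos _) (lt_min one_pos (Real.rpow_pos_of_pos two_pos μ))
  set C₁ : ℝ := Real.exp 1 * A * (2:ℝ) ^ (μ + 1) with hC₁
  set C₂ : ℝ := A * (1 + 2 * (μ + 1)) ^ (μ + 1)
    + max 1 ((2:ℝ) ^ μ) * Real.Gamma (μ + 1) * (2:ℝ) ^ (μ + 1) with hC₂
  set C₀ : ℝ := max C₁ C₂ + 1 with hC₀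
  have hC₁0 : 0 ≤ C₁ := by
    apply mul_nonneg (mul_nonneg (Real.exp_pos _).le hA0)
    exact Real.rpow_nonneg (by norm_num) _
  have hC₀0 : 0 < C₀ := by
    have := le_max_left C₁ C₂
    rw [hC₀]; linarith
  refine ⟨K * c₀, K * C₀, mul_pos hK0 hc₀0, mul_pos hK0 hC₀0, fun z hz => ?_⟩
  have hex : -ν - 1/2 = -(μ + 1) := by rw [hμdef]; ring
  have hrw : (∫ s in Set.Icc (-1 : ℝ) 1,
      Real.exp (z * s) * (K * (1 - s ^ 2) ^ μ)) =
      K * ∫ s in Set.Icc (-1:ℝ) 1, Real.exp (z * s) * (1 - s ^ 2) ^ μ := by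
    rw [← MeasureTheory.integral_const_mul]
    congr 1
    funext s
    ring
  have hXe : (0:ℝ) ≤ (1 + z) ^ (-(μ + 1)) * Real.exp z :=
    mul_nonneg (Real.rpow_nonneg (by linarith) _) (Real.exp_pos _).le
  constructor
  · rw [hex, hrw]
    calc K * c₀ * (1 + z) ^ (-(μ + 1)) * Real.exp z
        = K * (c₀ * (1 + z) ^ (-(μ + 1)) * Real.exp z) := by ring
      _ ≤ K * ∫ s in Set.Icc (-1:ℝ) 1, Real.exp (z * s) * (1 - s ^ 2) ^ μ :=
          mul_le_mul_of_nonneg_left (lower_bound hμ hz) hK0.le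
  · rw [hex, hrw]
    have hJ : (∫ s in Set.Icc (-1:ℝ) 1, Real.exp (z * s) * (1 - s ^ 2) ^ μ) ≤
        C₀ * ((1 + z) ^ (-(μ + 1)) * Real.exp z) := by
      rcases le_or_gt z 1 with h | h
      · calc (∫ s in Set.Icc (-1:ℝ) 1, Real.exp (z * s) * (1 - s ^ 2) ^ μ)
            ≤ C₁ * (1 + z) ^ (-(μ + 1)) * Real.exp z := upper_small hμ hz h
          _ = C₁ * ((1 + z) ^ (-(μ + 1)) * Real.exp z) := by ring
          _ ≤ C₀ * ((1 + z) ^ (-(μ + 1)) * Real.exp z) := by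
              apply mul_le_mul_of_nonneg_right _ hXe
              have := le_max_left C₁ C₂
              rw [hC₀]; linarith
      · calc (∫ s in Set.Icc (-1:ℝ) 1, Real.exp (z * s) * (1 - s ^ 2) ^ μ)
            ≤ C₂ * (1 + z) ^ (-(μ + 1)) * Real.exp z := upper_large hμ h.le
          _ = C₂ * ((1 + z) ^ (-(μ + 1)) * Real.exp z) := by ring
          _ ≤ C₀ * ((1 + z) ^ (-(μ + 1)) * Real.exp z) := by
              apply mul_le_mul_of_nonneg_right _ hXe
              have := le_max_right C₁ C₂
              rw [hC₀]; linarith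
    calc K * ∫ s in Set.Icc (-1:ℝ) 1, Real.exp (z * s) * (1 - s ^ 2) ^ μ
        ≤ K * (C₀ * ((1 + z) ^ (-(μ + 1)) * Real.exp z)) :=
          mul_le_mul_of_nonneg_left hJ hK0.le
      _ = K * C₀ * (1 + z) ^ (-(μ + 1)) * Real.exp z := by ring
end

section
/- Let κ ≥ 0 and let γ, ν be real numbers with γ > ν + 1/2 ≥ 0. Then there exist positive constants c, C depending only on κ, γ, ν such that for all real numbers 0 < B < A < D, c ≤ [∫_{-1}^{1} (D-Bs)^{-κ}(A-Bs)^{-γ} dΠ_ν(s)] · (D-B)^{κ} A^{ν+1/2} (A-B)^{γ-ν-1/2} ≤ C, where for ν > -1/2 the measure dΠ_ν(s) is proportional to (1-s²)^{ν-1/2} ds normalized to a probability measure, and Π_{-1/2} = (δ_{-1}+δ_{1})/2. -/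
open Real MeasureTheory
open scoped ENNReal NNReal

/-- The measure Π_ν on [-1,1]: for ν > -1/2 it has density
(Γ(ν+1)/(√π Γ(ν+1/2)))(1-s²)^{ν-1/2} with respect to Lebesgue measure;
Π_{-1/2} = (δ_{-1} + δ_1)/2. -/
noncomputable def jacobiPi (ν : ℝ) : Measure ℝ :=
  if ν = -1/2 then
    (1/2 : ENNReal) • (Measure.dirac (-1) + Measure.dirac 1)
  else
    (volume.restrict (Set.Icc (-1 : ℝ) 1)).withDensity
      (fun s => ENNReal.ofReal
        (Real.Gamma (ν + 1) / (Real.sqrt π * Real.Gamma (ν + 1/2)) * (1 - s ^ 2) ^ (ν - 1/2)))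

namespace Lem52

lemma intOn_shift (p : ℝ) (hp : -1 < p) :
    IntegrableOn (fun s : ℝ => (1 + s) ^ p) (Set.Icc (-1 : ℝ) 0) := by
  have h1 : IntervalIntegrable (fun u : ℝ => u ^ p) volume 0 1 :=
    intervalIntegral.intervalIntegrable_rpow' hp
  have h2 : IntervalIntegrable (fun s : ℝ => (s + 1) ^ p) volume (0 - 1) (1 - 1) :=
    IntervalIntegrable.comp_add_right h1 1
  norm_num at h2
  have h3 : IntegrableOn (fun s : ℝ => (1 + s) ^ p) (Set.Ioc (-1 : ℝ) 0) := by
    have := (intervalIntegrable_iff_integrableOn_Ioc_of_le (by norm_num : (-1:ℝ) ≤ 0)).mp h2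
    simpa [add_comm] using this
  rwa [integrableOn_Icc_iff_integrableOn_Ioc]

lemma intOn_shift' (p : ℝ) (hp : -1 < p) :
    IntegrableOn (fun s : ℝ => (1 - s) ^ p) (Set.Icc (0 : ℝ) 1) := by
  have h1 : IntervalIntegrable (fun u : ℝ => u ^ p) volume 0 1 :=
    intervalIntegral.intervalIntegrable_rpow' hp
  have h2 : IntervalIntegrable (fun s : ℝ => (1 - s) ^ p) volume (1 - 1) (1 - 0) :=
    (IntervalIntegrable.comp_sub_left h1 1).symm
  norm_num at h2
  rw [integrableOn_Icc_iff_integrableOn_Ioc]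
  exact (intervalIntegrable_iff_integrableOn_Ioc_of_le (by norm_num : (0:ℝ) ≤ 1)).mp h2

/-- Helper: product of a nonneg integrable function and a bounded measurable one. -/
lemma intOn_mul_bounded {w h : ℝ → ℝ} {S : Set ℝ} (hS : MeasurableSet S)
    (hw : IntegrableOn w S) (hw0 : ∀ s ∈ S, 0 ≤ w s)
    (hh : Measurable h) {C : ℝ} (hC : ∀ s ∈ S, |h s| ≤ C) :
    IntegrableOn (fun s => w s * h s) S := by
  refine Integrable.mono' (hw.mul_const C) (hw.1.mul hh.aestronglyMeasurable) ?_
  rw [ae_restrict_iff' hS]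
  filter_upwards with s hs
  rw [norm_mul, Real.norm_of_nonneg (hw0 s hs), Real.norm_eq_abs]
  exact mul_le_mul_of_nonneg_left (hC s hs) (hw0 s hs)

lemma rpow_le_max (p x : ℝ) (h1 : 1 ≤ x) (h2 : x ≤ 2) : x ^ p ≤ max 1 (2 ^ p) := by
  rcases le_or_gt 0 p with hp | hp
  · exact le_max_of_le_right (Real.rpow_le_rpow (by linarith) h2 hp)
  · exact le_max_of_le_left (Real.rpow_le_one_of_one_le_of_nonpos h1 hp.le)

lemma min_le_rpow (p x : ℝ) (h1 : 1 ≤ x) (h2 : x ≤ 2) : min 1 (2 ^ p) ≤ x ^ p := by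
  rcases le_or_gt 0 p with hp | hp
  · exact le_trans (min_le_left _ _) (Real.one_le_rpow h1 hp)
  · exact le_trans (min_le_right _ _) (Real.rpow_le_rpow_of_nonpos (by linarith) h2 hp.le)

lemma intOn_w (p : ℝ) (hp : -1 < p) :
    IntegrableOn (fun s : ℝ => (1 - s ^ 2) ^ p) (Set.Icc (-1 : ℝ) 1) := by
  set K : ℝ := max 1 (2 ^ p) with hK
  have hsplit : (fun s : ℝ => (1 - s ^ 2) ^ p) = fun s : ℝ => ((1 + s) * (1 - s)) ^ p := by
    funext s; ring_nf
  have hmeas : Measurable (fun s : ℝ => (1 - s ^ 2) ^ p) := by fun_prop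
  have left : IntegrableOn (fun s : ℝ => (1 - s ^ 2) ^ p) (Set.Icc (-1 : ℝ) 0) := by
    refine Integrable.mono' ((intOn_shift p hp).mul_const K) hmeas.aestronglyMeasurable ?_
    rw [ae_restrict_iff' measurableSet_Icc]
    filter_upwards with s hs
    obtain ⟨hs1, hs2⟩ := hs
    have h1 : (0:ℝ) ≤ 1 + s := by linarith
    have h2 : (0:ℝ) ≤ 1 - s := by linarith
    rw [show ((1:ℝ) - s ^ 2) = (1 + s) * (1 - s) by ring, Real.norm_of_nonneg (Real.rpow_nonneg (mul_nonneg h1 h2) p),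
      Real.mul_rpow h1 h2]
    exact mul_le_mul_of_nonneg_left (rpow_le_max p _ (by linarith) (by linarith))
      (Real.rpow_nonneg h1 p)
  have right : IntegrableOn (fun s : ℝ => (1 - s ^ 2) ^ p) (Set.Icc (0 : ℝ) 1) := by
    refine Integrable.mono' ((intOn_shift' p hp).mul_const K) hmeas.aestronglyMeasurable ?_
    rw [ae_restrict_iff' measurableSet_Icc]
    filter_upwards with s hs
    obtain ⟨hs1, hs2⟩ := hs
    have h1 : (0:ℝ) ≤ 1 + s := by linarith
    have h2 : (0:ℝ) ≤ 1 - s := by linarith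
    rw [show ((1:ℝ) - s ^ 2) = (1 + s) * (1 - s) by ring, Real.norm_of_nonneg (Real.rpow_nonneg (mul_nonneg h1 h2) p),
      Real.mul_rpow h1 h2, mul_comm ((1+s)^p)]
    exact mul_le_mul_of_nonneg_left (rpow_le_max p _ (by linarith) (by linarith))
      (Real.rpow_nonneg h2 p)
  have : Set.Icc (-1 : ℝ) 1 = Set.Icc (-1 : ℝ) 0 ∪ Set.Icc (0:ℝ) 1 :=
    (Set.Icc_union_Icc_eq_Icc (by norm_num) (by norm_num)).symm
  rw [this]
  exact left.union right


lemma hII_aux (p γ t B : ℝ) (hp : -1 < p) (hγ0 : 0 < γ) (ht : 0 < t) (hB : 0 < B)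
    {a b : ℝ} (ha : 0 ≤ a) (hb : 0 ≤ b) :
    IntervalIntegrable (fun u => u ^ p * (t + B*u) ^ (-γ)) volume a b := by
  refine (intervalIntegral.intervalIntegrable_rpow' hp).mul_continuousOn ?_
  refine ContinuousOn.rpow_const
    ((continuous_const.add (continuous_const.mul continuous_id)).continuousOn) ?_
  intro x hx
  have hx0 : 0 ≤ x := by
    rcases Set.mem_uIcc.mp hx with ⟨h1, _⟩ | ⟨h1, _⟩ <;> linarith
  have hpos : 0 < t + B*x := by nlinarith [mul_nonneg hB.le hx0]
  exact Or.inl (ne_of_gt hpos)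

set_option maxHeartbeats 1000000 in
lemma key (κ γ p : ℝ) (hκ : 0 ≤ κ) (hp : -1 < p) (hγ : p + 1 < γ) :
    ∃ c C : ℝ, 0 < c ∧ 0 < C ∧ ∀ B A D : ℝ, 0 < B → B < A → A < D →
      c ≤ (∫ s in Set.Icc (-1:ℝ) 1,
            (1 - s ^ 2) ^ p * ((D - B * s) ^ (-κ) * (A - B * s) ^ (-γ)))
            * ((D - B) ^ κ * A ^ (p + 1) * (A - B) ^ (γ - p - 1)) ∧
      (∫ s in Set.Icc (-1:ℝ) 1,
            (1 - s ^ 2) ^ p * ((D - B * s) ^ (-κ) * (A - B * s) ^ (-γ)))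
            * ((D - B) ^ κ * A ^ (p + 1) * (A - B) ^ (γ - p - 1)) ≤ C := by
  have hp1 : (0:ℝ) < p + 1 := by linarith
  have hgp : (0:ℝ) < γ - p - 1 := by linarith
  have hγ0 : (0:ℝ) < γ := by linarith
  obtain ⟨k, hk_def⟩ : ∃ k : ℝ, k = min 1 (2 ^ p) := ⟨_, rfl⟩
  obtain ⟨K, hK_def⟩ : ∃ K : ℝ, K = max 1 (2 ^ p) := ⟨_, rfl⟩
  have hk0 : 0 < k := hk_def ▸ lt_min one_pos (Real.rpow_pos_of_pos two_pos p)
  have hK0 : 0 < K := hK_def ▸ lt_of_lt_of_le one_pos (le_max_left _ _)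
  obtain ⟨M, hM_def⟩ : ∃ M : ℝ, M = ∫ s in Set.Icc (-1:ℝ) 0, (1 - s ^ 2) ^ p := ⟨_, rfl⟩
  have hM0 : 0 ≤ M := by
    rw [hM_def]
    apply setIntegral_nonneg measurableSet_Icc
    intro s hs
    exact Real.rpow_nonneg (by nlinarith [hs.1, hs.2]) p
  refine ⟨k * (2:ℝ) ^ (-κ) * (2:ℝ) ^ (-γ) / (p + 1),
    M + K * 2 ^ (p+1) * (1/(p+1) + 1/(γ-p-1)), by positivity,
    add_pos_of_nonneg_of_pos hM0 (by positivity), fun B A D hB hBA hAD => ?_⟩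
  have hA : 0 < A := hB.trans hBA
  have ht : 0 < A - B := sub_pos.2 hBA
  have hD : 0 < D - B := by linarith
  have htD : A - B ≤ D - B := by linarith
  have htA : A - B ≤ A := by linarith
  obtain ⟨m, hm_def⟩ : ∃ m : ℝ, m = min 1 ((A - B) / B) := ⟨_, rfl⟩
  have hm0 : 0 < m := hm_def ▸ lt_min one_pos (div_pos ht hB)
  have hm1 : m ≤ 1 := hm_def ▸ min_le_left _ _
  have hmB : B * m ≤ A - B := by
    calc B * m ≤ B * ((A - B) / B) :=
          mul_le_mul_of_nonneg_left (hm_def ▸ min_le_right _ _) hB.le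
      _ = A - B := by field_simp
  have hmA : (A - B) / A ≤ m := by
    rw [hm_def]
    exact le_min (div_le_one_of_le₀ htA hA.le) (by gcongr)
  have hDs : ∀ s ∈ Set.Icc (-1:ℝ) 1, 0 < D - B * s ∧ D - B ≤ D - B * s := by
    intro s hs; constructor <;> nlinarith [hs.2]
  have hAs : ∀ s ∈ Set.Icc (-1:ℝ) 1, 0 < A - B * s ∧ A - B ≤ A - B * s := by
    intro s hs; constructor <;> nlinarith [hs.2]
  have hh0 : ∀ s ∈ Set.Icc (-1:ℝ) 1, 0 ≤ (D - B * s) ^ (-κ) * (A - B * s) ^ (-γ) := by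
    intro s hs
    exact mul_nonneg (Real.rpow_nonneg (hDs s hs).1.le _) (Real.rpow_nonneg (hAs s hs).1.le _)
  have hhb : ∀ s ∈ Set.Icc (-1:ℝ) 1,
      |(D - B * s) ^ (-κ) * (A - B * s) ^ (-γ)| ≤ (D - B) ^ (-κ) * (A - B) ^ (-γ) := by
    intro s hs
    rw [abs_of_nonneg (hh0 s hs)]
    exact mul_le_mul (Real.rpow_le_rpow_of_nonpos hD (hDs s hs).2 (neg_nonpos.2 hκ))
      (Real.rpow_le_rpow_of_nonpos ht (hAs s hs).2 (neg_nonpos.2 hγ0.le))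
      (Real.rpow_nonneg (hAs s hs).1.le _) (Real.rpow_nonneg hD.le _)
  have hw0 : ∀ s ∈ Set.Icc (-1:ℝ) 1, 0 ≤ (1 - s ^ 2) ^ p := by
    intro s hs
    exact Real.rpow_nonneg (by nlinarith [hs.1, hs.2]) p
  have hg_int : IntegrableOn
      (fun s => (1 - s ^ 2) ^ p * ((D - B * s) ^ (-κ) * (A - B * s) ^ (-γ)))
      (Set.Icc (-1:ℝ) 1) :=
    intOn_mul_bounded measurableSet_Icc (intOn_w p hp) hw0 (by fun_prop) hhb
  have hP : (0:ℝ) < (D - B) ^ κ * A ^ (p + 1) * (A - B) ^ (γ - p - 1) := by positivity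
  have ne1 : (D - B) ^ κ ≠ 0 := ne_of_gt (Real.rpow_pos_of_pos hD _)
  have ne2 : A ^ (p+1) ≠ 0 := ne_of_gt (Real.rpow_pos_of_pos hA _)
  have ne3 : (A - B) ^ γ ≠ 0 := ne_of_gt (Real.rpow_pos_of_pos ht _)
  have ne4 : (A - B) ^ (p+1) ≠ 0 := ne_of_gt (Real.rpow_pos_of_pos ht _)
  have ne5 : (2:ℝ) ^ κ ≠ 0 := ne_of_gt (Real.rpow_pos_of_pos two_pos _)
  have ne6 : (2:ℝ) ^ γ ≠ 0 := ne_of_gt (Real.rpow_pos_of_pos two_pos _)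
  have ne7 : A ^ γ ≠ 0 := ne_of_gt (Real.rpow_pos_of_pos hA _)
  constructor
  · -- LOWER BOUND
    obtain ⟨cLow, hcLow_def⟩ : ∃ c : ℝ,
      c = k * ((2*(D - B)) ^ (-κ) * (2*(A - B)) ^ (-γ)) := ⟨_, rfl⟩
    have hcLow0 : 0 ≤ cLow := by
      rw [hcLow_def]
      exact mul_nonneg hk0.le (mul_nonneg (Real.rpow_nonneg (by positivity) _)
        (Real.rpow_nonneg (by positivity) _))
    have hsub : Set.Icc (1-m) 1 ⊆ Set.Icc (-1:ℝ) 1 :=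
      Set.Icc_subset_Icc (by linarith) le_rfl
    have hsub' : Set.Icc (1-m) 1 ⊆ Set.Icc (0:ℝ) 1 :=
      Set.Icc_subset_Icc (by linarith) le_rfl
    have low1 : (∫ s in Set.Icc (1-m) 1,
        (1 - s ^ 2) ^ p * ((D - B * s) ^ (-κ) * (A - B * s) ^ (-γ)))
        ≤ ∫ s in Set.Icc (-1:ℝ) 1,
        (1 - s ^ 2) ^ p * ((D - B * s) ^ (-κ) * (A - B * s) ^ (-γ)) := by
      refine setIntegral_mono_set hg_int ?_ (HasSubset.Subset.eventuallyLE hsub)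
      rw [Filter.EventuallyLE, ae_restrict_iff' measurableSet_Icc]
      filter_upwards with s hs
      exact mul_nonneg (hw0 s hs) (hh0 s hs)
    have low2 : (∫ s in Set.Icc (1-m) 1, cLow * (1-s) ^ p)
        ≤ ∫ s in Set.Icc (1-m) 1,
          (1 - s ^ 2) ^ p * ((D - B * s) ^ (-κ) * (A - B * s) ^ (-γ)) := by
      refine setIntegral_mono_on
        (((intOn_shift' p hp).mono_set hsub').const_mul cLow)
        (hg_int.mono_set hsub) measurableSet_Icc ?_
      intro s hs
      have hs0 : 0 ≤ s := by have := hs.1; linarith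
      have hs1 : s ≤ 1 := hs.2
      have hs2 : 1 - s ≤ m := by have := hs.1; linarith
      have hw : k * (1-s) ^ p ≤ (1 - s ^ 2) ^ p := by
        rw [show (1:ℝ) - s ^ 2 = (1 + s) * (1 - s) by ring,
          Real.mul_rpow (show (0:ℝ) ≤ 1 + s by linarith) (show (0:ℝ) ≤ 1 - s by linarith),
          hk_def]
        exact mul_le_mul_of_nonneg_right (min_le_rpow p _ (by linarith) (by linarith))
          (Real.rpow_nonneg (by linarith) p)
      have hBs : B * (1 - s) ≤ A - B :=
        le_trans (mul_le_mul_of_nonneg_left hs2 hB.le) hmB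
      have hDle : D - B * s ≤ 2 * (D - B) := by linarith [hBs, htD]
      have hAle : A - B * s ≤ 2 * (A - B) := by linarith [hBs]
      have hhge : (2*(D - B)) ^ (-κ) * (2*(A - B)) ^ (-γ)
          ≤ (D - B * s) ^ (-κ) * (A - B * s) ^ (-γ) :=
        mul_le_mul
          (Real.rpow_le_rpow_of_nonpos (hDs s (hsub hs)).1 hDle (neg_nonpos.2 hκ))
          (Real.rpow_le_rpow_of_nonpos (hAs s (hsub hs)).1 hAle (neg_nonpos.2 hγ0.le))
          (Real.rpow_nonneg (by positivity) _)
          (Real.rpow_nonneg (hDs s (hsub hs)).1.le _)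
      calc cLow * (1-s) ^ p
          = (k * (1-s) ^ p) * ((2*(D - B)) ^ (-κ) * (2*(A - B)) ^ (-γ)) := by
            rw [hcLow_def]; ring
        _ ≤ (1 - s ^ 2) ^ p * ((D - B * s) ^ (-κ) * (A - B * s) ^ (-γ)) :=
            mul_le_mul hw hhge
              (mul_nonneg (Real.rpow_nonneg (by positivity) _)
                (Real.rpow_nonneg (by positivity) _))
              (hw0 s (hsub hs))
    have low3 : (∫ s in Set.Icc (1-m) 1, cLow * (1-s) ^ p)
        = cLow * (m ^ (p+1) / (p+1)) := by
      rw [integral_const_mul]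
      congr 1
      calc (∫ s in Set.Icc (1-m) 1, (1-s) ^ p)
          = ∫ s in Set.Ioc (1-m) 1, (1-s) ^ p := integral_Icc_eq_integral_Ioc
        _ = ∫ s in (1-m)..1, (1-s) ^ p :=
            (intervalIntegral.integral_of_le (by linarith)).symm
        _ = ∫ u in (1-(1:ℝ))..(1-(1-m)), u ^ p :=
            intervalIntegral.integral_comp_sub_left (fun u => u ^ p) 1
        _ = ∫ u in (0:ℝ)..m, u ^ p := by norm_num
        _ = (m ^ (p+1) - 0 ^ (p+1)) / (p+1) :=
            integral_rpow (Or.inl hp)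
        _ = m ^ (p+1) / (p+1) := by
            rw [Real.zero_rpow (by linarith : p+1 ≠ 0)]; ring
    have low4 : cLow * (((A - B)/A) ^ (p+1) / (p+1)) ≤ cLow * (m ^ (p+1) / (p+1)) := by
      have h1 : ((A - B)/A) ^ (p+1) ≤ m ^ (p+1) :=
        Real.rpow_le_rpow (by positivity) hmA (by linarith)
      gcongr
    have halg : (cLow * (((A - B)/A) ^ (p+1) / (p+1))) *
        ((D - B) ^ κ * A ^ (p + 1) * (A - B) ^ (γ - p - 1))
        = k * (2:ℝ) ^ (-κ) * (2:ℝ) ^ (-γ) / (p + 1) := by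
      have e1 : (2*(D-B)) ^ (-κ) = ((2:ℝ)^κ * (D-B)^κ)⁻¹ := by
        rw [Real.rpow_neg (by positivity), Real.mul_rpow two_pos.le hD.le]
      have e2 : (2*(A-B)) ^ (-γ) = ((2:ℝ)^γ * (A-B)^γ)⁻¹ := by
        rw [Real.rpow_neg (by positivity), Real.mul_rpow two_pos.le ht.le]
      have e3 : ((A-B)/A) ^ (p+1) = (A-B)^(p+1) / A^(p+1) := Real.div_rpow ht.le hA.le _
      have e4 : (A-B) ^ (γ-p-1) = (A-B)^γ / (A-B)^(p+1) := by
        rw [show γ - p - 1 = γ - (p+1) by ring, Real.rpow_sub ht]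
      have e5 : (2:ℝ) ^ (-κ) = ((2:ℝ)^κ)⁻¹ := Real.rpow_neg two_pos.le κ
      have e6 : (2:ℝ) ^ (-γ) = ((2:ℝ)^γ)⁻¹ := Real.rpow_neg two_pos.le γ
      rw [hcLow_def, e1, e2, e3, e4, e5, e6]
      field_simp
    calc k * (2:ℝ) ^ (-κ) * (2:ℝ) ^ (-γ) / (p + 1)
        = (cLow * (((A - B)/A) ^ (p+1) / (p+1))) *
          ((D - B) ^ κ * A ^ (p + 1) * (A - B) ^ (γ - p - 1)) := halg.symm
      _ ≤ (cLow * (m ^ (p+1) / (p+1))) *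
          ((D - B) ^ κ * A ^ (p + 1) * (A - B) ^ (γ - p - 1)) :=
          mul_le_mul_of_nonneg_right low4 hP.le
      _ ≤ _ := by
          refine mul_le_mul_of_nonneg_right ?_ hP.le
          rw [← low3]
          exact low2.trans low1
  · -- UPPER BOUND
    have hII : ∀ a b : ℝ, 0 ≤ a → 0 ≤ b →
        IntervalIntegrable (fun u => u ^ p * (A - B + B*u) ^ (-γ)) volume a b :=
      fun a b ha hb => hII_aux p γ (A - B) B hp hγ0 ht hB ha hb
    have hsub1 : Set.Icc (-1:ℝ) 0 ⊆ Set.Icc (-1:ℝ) 1 := Set.Icc_subset_Icc le_rfl (by norm_num)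
    have hsub2 : Set.Ioc (0:ℝ) 1 ⊆ Set.Icc (-1:ℝ) 1 := fun x hx => ⟨by linarith [hx.1], hx.2⟩
    have split : (∫ s in Set.Icc (-1:ℝ) 1,
          (1 - s ^ 2) ^ p * ((D - B * s) ^ (-κ) * (A - B * s) ^ (-γ)))
        = (∫ s in Set.Icc (-1:ℝ) 0,
          (1 - s ^ 2) ^ p * ((D - B * s) ^ (-κ) * (A - B * s) ^ (-γ)))
        + ∫ s in Set.Ioc (0:ℝ) 1,
          (1 - s ^ 2) ^ p * ((D - B * s) ^ (-κ) * (A - B * s) ^ (-γ)) := by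
      rw [show Set.Icc (-1:ℝ) 1 = Set.Icc (-1:ℝ) 0 ∪ Set.Ioc (0:ℝ) 1 from
        (Set.Icc_union_Ioc_eq_Icc (by norm_num) (by norm_num)).symm]
      exact setIntegral_union (by rw [Set.disjoint_left]; rintro x ⟨_, h2⟩ ⟨h3, _⟩; linarith)
        measurableSet_Ioc (hg_int.mono_set hsub1) (hg_int.mono_set hsub2)
    have part1 : (∫ s in Set.Icc (-1:ℝ) 0,
          (1 - s ^ 2) ^ p * ((D - B * s) ^ (-κ) * (A - B * s) ^ (-γ)))
        ≤ ((D - B) ^ (-κ) * A ^ (-γ)) * M := by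
      rw [hM_def, ← integral_const_mul]
      refine setIntegral_mono_on (hg_int.mono_set hsub1)
        (((intOn_w p hp).mono_set hsub1).const_mul _) measurableSet_Icc ?_
      intro s hs
      have hsI : s ∈ Set.Icc (-1:ℝ) 1 := hsub1 hs
      have hge : A ≤ A - B * s := by nlinarith [hs.2, hB.le]
      have hb : (D - B * s) ^ (-κ) * (A - B * s) ^ (-γ) ≤ (D - B) ^ (-κ) * A ^ (-γ) :=
        mul_le_mul (Real.rpow_le_rpow_of_nonpos hD (hDs s hsI).2 (neg_nonpos.2 hκ))
          (Real.rpow_le_rpow_of_nonpos hA hge (neg_nonpos.2 hγ0.le))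
          (Real.rpow_nonneg (hAs s hsI).1.le _) (Real.rpow_nonneg hD.le _)
      calc (1 - s ^ 2) ^ p * ((D - B * s) ^ (-κ) * (A - B * s) ^ (-γ))
          ≤ (1 - s ^ 2) ^ p * ((D - B) ^ (-κ) * A ^ (-γ)) :=
            mul_le_mul_of_nonneg_left hb (hw0 s hsI)
        _ = ((D - B) ^ (-κ) * A ^ (-γ)) * (1 - s ^ 2) ^ p := by ring
    obtain ⟨J, hJ_def⟩ : ∃ J : ℝ,
      J = ∫ s in Set.Ioc (0:ℝ) 1, (1-s) ^ p * (A - B*s) ^ (-γ) := ⟨_, rfl⟩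
    have hJint : IntegrableOn (fun s => (1-s) ^ p * (A - B*s) ^ (-γ)) (Set.Ioc (0:ℝ) 1) := by
      refine intOn_mul_bounded measurableSet_Ioc
        ((intOn_shift' p hp).mono_set Set.Ioc_subset_Icc_self)
        (fun s hs => Real.rpow_nonneg (by linarith [hs.2]) p) (by fun_prop)
        (C := (A - B) ^ (-γ)) ?_
      intro s hs
      have hsI : s ∈ Set.Icc (-1:ℝ) 1 := hsub2 hs
      rw [abs_of_nonneg (Real.rpow_nonneg (hAs s hsI).1.le _)]
      exact Real.rpow_le_rpow_of_nonpos ht (hAs s hsI).2 (neg_nonpos.2 hγ0.le)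
    have part2 : (∫ s in Set.Ioc (0:ℝ) 1,
          (1 - s ^ 2) ^ p * ((D - B * s) ^ (-κ) * (A - B * s) ^ (-γ)))
        ≤ (K * (D - B) ^ (-κ)) * J := by
      rw [hJ_def, ← integral_const_mul]
      refine setIntegral_mono_on (hg_int.mono_set hsub2) (hJint.const_mul _)
        measurableSet_Ioc ?_
      intro s hs
      have hsI : s ∈ Set.Icc (-1:ℝ) 1 := hsub2 hs
      have h1 : (0:ℝ) ≤ 1 + s := by linarith [hs.1]
      have h2 : (0:ℝ) ≤ 1 - s := by linarith [hs.2]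
      have f1 : (1+s) ^ p ≤ K :=
        hK_def ▸ rpow_le_max p _ (by linarith [hs.1]) (by linarith [hs.2])
      have f2 : (D - B*s) ^ (-κ) ≤ (D - B) ^ (-κ) :=
        Real.rpow_le_rpow_of_nonpos hD (hDs s hsI).2 (neg_nonpos.2 hκ)
      calc (1 - s ^ 2) ^ p * ((D - B * s) ^ (-κ) * (A - B * s) ^ (-γ))
          = ((1+s) ^ p * (D - B*s) ^ (-κ)) * ((1-s) ^ p * (A - B*s) ^ (-γ)) := by
            rw [show (1:ℝ) - s ^ 2 = (1 + s) * (1 - s) by ring, Real.mul_rpow h1 h2]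
            ring
        _ ≤ (K * (D - B) ^ (-κ)) * ((1-s) ^ p * (A - B*s) ^ (-γ)) := by
            refine mul_le_mul_of_nonneg_right
              (mul_le_mul f1 f2 (Real.rpow_nonneg (hDs s hsI).1.le _) hK0.le) ?_
            exact mul_nonneg (Real.rpow_nonneg h2 _) (Real.rpow_nonneg (hAs s hsI).1.le _)
    have hJ1 : J = ∫ u in (0:ℝ)..1, u ^ p * (A - B + B*u) ^ (-γ) := by
      rw [hJ_def, ← intervalIntegral.integral_of_le zero_le_one]
      calc (∫ s in (0:ℝ)..1, (1-s) ^ p * (A - B*s) ^ (-γ))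
          = ∫ s in (0:ℝ)..1, (fun u => u ^ p * (A - B + B*u) ^ (-γ)) (1 - s) := by
            refine intervalIntegral.integral_congr fun s hs => ?_
            simp only
            rw [show A - B + B*(1-s) = A - B*s by ring]
        _ = ∫ u in (1-(1:ℝ))..(1-(0:ℝ)), u ^ p * (A - B + B*u) ^ (-γ) :=
            intervalIntegral.integral_comp_sub_left
              (fun u => u ^ p * (A - B + B*u) ^ (-γ)) 1
        _ = ∫ u in (0:ℝ)..1, u ^ p * (A - B + B*u) ^ (-γ) := by norm_num
    have hsplitJ : (∫ u in (0:ℝ)..1, u ^ p * (A - B + B*u) ^ (-γ))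
        = (∫ u in (0:ℝ)..m, u ^ p * (A - B + B*u) ^ (-γ))
          + ∫ u in m..1, u ^ p * (A - B + B*u) ^ (-γ) :=
      (intervalIntegral.integral_add_adjacent_intervals (hII 0 m le_rfl hm0.le)
        (hII m 1 hm0.le zero_le_one)).symm
    have piece1 : (∫ u in (0:ℝ)..m, u ^ p * (A - B + B*u) ^ (-γ))
        ≤ (A - B) ^ (-γ) * (m ^ (p+1) / (p+1)) := by
      have mono : (∫ u in (0:ℝ)..m, u ^ p * (A - B + B*u) ^ (-γ))
          ≤ ∫ u in (0:ℝ)..m, (A - B) ^ (-γ) * u ^ p := by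
        refine intervalIntegral.integral_mono_on hm0.le (hII 0 m le_rfl hm0.le)
          ((intervalIntegral.intervalIntegrable_rpow' hp).const_mul _) ?_
        intro u hu
        have hu0 : 0 ≤ u := hu.1
        have hle : (A - B + B*u) ^ (-γ) ≤ (A - B) ^ (-γ) :=
          Real.rpow_le_rpow_of_nonpos ht (by nlinarith [mul_nonneg hB.le hu0])
            (neg_nonpos.2 hγ0.le)
        calc u ^ p * (A - B + B*u) ^ (-γ) ≤ u ^ p * (A - B) ^ (-γ) :=
              mul_le_mul_of_nonneg_left hle (Real.rpow_nonneg hu0 _)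
          _ = (A - B) ^ (-γ) * u ^ p := mul_comm _ _
      rw [intervalIntegral.integral_const_mul, integral_rpow (Or.inl hp),
        Real.zero_rpow (by linarith : p+1 ≠ 0)] at mono
      simpa using mono
    have piece2 : (∫ u in m..1, u ^ p * (A - B + B*u) ^ (-γ))
        ≤ 2 ^ (p+1) * ((A - B) ^ (p+1-γ) * A ^ (-(p+1))) / (γ-p-1) := by
      rcases le_or_gt 1 ((A - B)/B) with hc | hc
      · have hm_eq : m = 1 := hm_def.trans (min_eq_left hc)
        rw [hm_eq, intervalIntegral.integral_same]
        positivity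
      · have hm_eq : m = (A - B)/B := hm_def.trans (min_eq_right hc.le)
        have htB : A - B < B := (div_lt_one hB).mp hc
        have hA2B : A ≤ 2*B := by linarith
        have notmem : (0:ℝ) ∉ Set.uIcc m 1 := by
          intro h0
          rcases Set.mem_uIcc.mp h0 with ⟨h1, _⟩ | ⟨_, h1⟩ <;> linarith
        have mono : (∫ u in m..1, u ^ p * (A - B + B*u) ^ (-γ))
            ≤ ∫ u in m..1, B ^ (-γ) * u ^ (p - γ) := by
          refine intervalIntegral.integral_mono_on hm1 (hII m 1 hm0.le zero_le_one)
            ((intervalIntegral.intervalIntegrable_rpow (Or.inr notmem)).const_mul _) ?_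
          intro u hu
          have hu0 : 0 < u := lt_of_lt_of_le hm0 hu.1
          have e : u ^ p * (B*u) ^ (-γ) = B ^ (-γ) * u ^ (p-γ) := by
            rw [Real.mul_rpow hB.le hu0.le, show p - γ = p + (-γ) by ring,
              Real.rpow_add hu0]
            ring
          calc u ^ p * (A - B + B*u) ^ (-γ) ≤ u ^ p * (B*u) ^ (-γ) := by
                refine mul_le_mul_of_nonneg_left ?_ (Real.rpow_nonneg hu0.le _)
                exact Real.rpow_le_rpow_of_nonpos (by positivity) (by nlinarith)
                  (neg_nonpos.2 hγ0.le)
            _ = B ^ (-γ) * u ^ (p-γ) := e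
        rw [intervalIntegral.integral_const_mul,
          integral_rpow (Or.inr ⟨by intro hh; linarith, notmem⟩),
          Real.one_rpow] at mono
        refine le_trans mono ?_
        have hne : p - γ + 1 ≠ 0 := by intro hh; linarith
        have hne' : γ - p - 1 ≠ 0 := by linarith
        have eqq : (1 - m ^ (p-γ+1))/(p-γ+1) = (m ^ (p-γ+1) - 1)/(γ-p-1) := by
          field_simp
          ring
        have step1 : B ^ (-γ) * ((1 - m ^ (p-γ+1))/(p-γ+1))
            ≤ B ^ (-γ) * (m ^ (p-γ+1)/(γ-p-1)) := by
          refine mul_le_mul_of_nonneg_left ?_ (Real.rpow_nonneg hB.le _)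
          rw [eqq]
          exact (div_le_div_iff_of_pos_right hgp).mpr (by linarith)
        refine le_trans step1 ?_
        have eB : B ^ γ * B ^ (p-γ+1) = B ^ (p+1) := by
          rw [← Real.rpow_add hB]
          congr 1
          ring
        have bne1 : B ^ γ ≠ 0 := ne_of_gt (Real.rpow_pos_of_pos hB _)
        have bne2 : B ^ (p-γ+1) ≠ 0 := ne_of_gt (Real.rpow_pos_of_pos hB _)
        have bne3 : B ^ (p+1) ≠ 0 := ne_of_gt (Real.rpow_pos_of_pos hB _)
        have eq1 : B ^ (-γ) * m ^ (p-γ+1) = (A - B) ^ (p+1-γ) * (B ^ (p+1))⁻¹ := by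
          rw [hm_eq, Real.div_rpow ht.le hB.le, div_eq_mul_inv, Real.rpow_neg hB.le,
            show p+1-γ = p-γ+1 by ring, ← eB, mul_inv]
          ring
        have ineqB : (B ^ (p+1))⁻¹ ≤ 2 ^ (p+1) * (A ^ (p+1))⁻¹ := by
          have e2 : ((A/2):ℝ) ^ (p+1) ≤ B ^ (p+1) :=
            Real.rpow_le_rpow (by positivity) (by linarith) (by linarith)
          have e3 : ((A/2):ℝ) ^ (p+1) = A ^ (p+1) / 2 ^ (p+1) :=
            Real.div_rpow hA.le two_pos.le _
          calc (B ^ (p+1))⁻¹ ≤ (((A/2):ℝ) ^ (p+1))⁻¹ :=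
                inv_anti₀ (Real.rpow_pos_of_pos (by positivity) _) e2
            _ = 2 ^ (p+1) * (A ^ (p+1))⁻¹ := by
                rw [e3, inv_div, div_eq_mul_inv]
        calc B ^ (-γ) * (m ^ (p-γ+1)/(γ-p-1))
            = (B ^ (-γ) * m ^ (p-γ+1))/(γ-p-1) := by ring
          _ ≤ ((A - B) ^ (p+1-γ) * (2 ^ (p+1) * (A ^ (p+1))⁻¹))/(γ-p-1) := by
              refine (div_le_div_iff_of_pos_right hgp).mpr ?_
              rw [eq1]
              exact mul_le_mul_of_nonneg_left ineqB (Real.rpow_nonneg ht.le _)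
          _ = 2 ^ (p+1) * ((A - B) ^ (p+1-γ) * A ^ (-(p+1)))/(γ-p-1) := by
              rw [Real.rpow_neg hA.le]
              ring
    have hm_le : m ≤ 2*(A - B)/A := by
      rcases le_total (A - B) B with hc | hc
      · have hmr : m ≤ (A - B)/B := by rw [hm_def]; exact min_le_right _ _
        refine le_trans hmr ?_
        rw [div_le_div_iff₀ hB (by positivity : (0:ℝ) < A)]
        nlinarith [mul_nonneg ht.le (by linarith : (0:ℝ) ≤ 2*B - A)]
      · refine le_trans hm1 ?_
        rw [le_div_iff₀ (by positivity : (0:ℝ) < A)]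
        linarith
    have piece1' : (A - B) ^ (-γ) * (m ^ (p+1) / (p+1))
        ≤ (A - B) ^ (-γ) * ((2*(A - B)/A) ^ (p+1) / (p+1)) := by
      refine mul_le_mul_of_nonneg_left ?_ (Real.rpow_nonneg ht.le _)
      exact (div_le_div_iff_of_pos_right hp1).mpr (Real.rpow_le_rpow hm0.le hm_le (by linarith))
    have hKD0 : (0:ℝ) ≤ K * (D - B) ^ (-κ) := mul_nonneg hK0.le (Real.rpow_nonneg hD.le _)
    have Jle : J ≤ (A - B) ^ (-γ) * ((2*(A - B)/A) ^ (p+1) / (p+1))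
        + 2 ^ (p+1) * ((A - B) ^ (p+1-γ) * A ^ (-(p+1))) / (γ-p-1) := by
      rw [hJ1, hsplitJ]
      exact add_le_add (piece1.trans piece1') piece2
    have total : (∫ s in Set.Icc (-1:ℝ) 1,
          (1 - s ^ 2) ^ p * ((D - B * s) ^ (-κ) * (A - B * s) ^ (-γ)))
        ≤ ((D - B) ^ (-κ) * A ^ (-γ)) * M
          + (K * (D - B) ^ (-κ)) * ((A - B) ^ (-γ) * ((2*(A - B)/A) ^ (p+1) / (p+1))
            + 2 ^ (p+1) * ((A - B) ^ (p+1-γ) * A ^ (-(p+1))) / (γ-p-1)) := by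
      rw [split]
      exact add_le_add part1 (part2.trans (mul_le_mul_of_nonneg_left Jle hKD0))
    have r1 : (D - B) ^ (-κ) = ((D - B) ^ κ)⁻¹ := Real.rpow_neg hD.le κ
    have r2 : A ^ (-γ) = (A ^ γ)⁻¹ := Real.rpow_neg hA.le γ
    have r3 : (A - B) ^ (γ-p-1) = (A - B) ^ γ / (A - B) ^ (p+1) := by
      rw [show γ-p-1 = γ-(p+1) by ring, Real.rpow_sub ht]
    have r4 : ((A - B)/A) ^ (γ-p-1) = ((A - B) ^ γ / (A - B) ^ (p+1))/(A ^ γ / A ^ (p+1)) := by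
      rw [Real.div_rpow ht.le hA.le, r3, show γ-p-1 = γ-(p+1) by ring, Real.rpow_sub hA]
    have r5 : (2*(A - B)/A) ^ (p+1) = 2 ^ (p+1) * (A - B) ^ (p+1) / A ^ (p+1) := by
      rw [Real.div_rpow (by positivity) hA.le, Real.mul_rpow two_pos.le ht.le]
    have r6 : (A - B) ^ (p+1-γ) = (A - B) ^ (p+1) / (A - B) ^ γ := by
      rw [show p+1-γ = (p+1)-γ by ring, Real.rpow_sub ht]
    have r7 : A ^ (-(p+1)) = (A ^ (p+1))⁻¹ := Real.rpow_neg hA.le _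
    have r8 : (A - B) ^ (-γ) = ((A - B) ^ γ)⁻¹ := Real.rpow_neg ht.le γ
    have eqU1 : (((D - B) ^ (-κ) * A ^ (-γ)) * M)
          * ((D - B) ^ κ * A ^ (p+1) * (A - B) ^ (γ-p-1))
        = M * (((A - B)/A) ^ (γ-p-1)) := by
      rw [r1, r2, r3, r4]
      field_simp
    have eqU2 : ((K * (D - B) ^ (-κ)) * ((A - B) ^ (-γ) * ((2*(A - B)/A) ^ (p+1) / (p+1))
            + 2 ^ (p+1) * ((A - B) ^ (p+1-γ) * A ^ (-(p+1))) / (γ-p-1)))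
          * ((D - B) ^ κ * A ^ (p+1) * (A - B) ^ (γ-p-1))
        = K * 2 ^ (p+1) * (1/(p+1) + 1/(γ-p-1)) := by
      rw [r1, r3, r5, r6, r7, r8]
      field_simp
    have hfrac : ((A - B)/A) ^ (γ-p-1) ≤ 1 :=
      Real.rpow_le_one (by positivity) (by rw [div_le_one hA]; linarith) hgp.le
    calc (∫ s in Set.Icc (-1:ℝ) 1,
          (1 - s ^ 2) ^ p * ((D - B * s) ^ (-κ) * (A - B * s) ^ (-γ)))
          * ((D - B) ^ κ * A ^ (p+1) * (A - B) ^ (γ-p-1))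
        ≤ (((D - B) ^ (-κ) * A ^ (-γ)) * M
            + (K * (D - B) ^ (-κ)) * ((A - B) ^ (-γ) * ((2*(A - B)/A) ^ (p+1) / (p+1))
              + 2 ^ (p+1) * ((A - B) ^ (p+1-γ) * A ^ (-(p+1))) / (γ-p-1)))
          * ((D - B) ^ κ * A ^ (p+1) * (A - B) ^ (γ-p-1)) :=
          mul_le_mul_of_nonneg_right total hP.le
      _ = M * (((A - B)/A) ^ (γ-p-1)) + K * 2 ^ (p+1) * (1/(p+1) + 1/(γ-p-1)) := by
          rw [add_mul, eqU1, eqU2]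
      _ ≤ M + K * 2 ^ (p+1) * (1/(p+1) + 1/(γ-p-1)) := by
          have h1 : M * (((A - B)/A) ^ (γ-p-1)) ≤ M * 1 :=
            mul_le_mul_of_nonneg_left hfrac hM0
          linarith


lemma integral_jacobi (ν : ℝ) (hν : -1/2 < ν) (f : ℝ → ℝ) :
    ∫ s, f s ∂(jacobiPi ν) = ∫ s in Set.Icc (-1:ℝ) 1,
      (Real.Gamma (ν + 1) / (Real.sqrt π * Real.Gamma (ν + 1/2))
        * (1 - s ^ 2) ^ (ν - 1/2)) * f s := by
  have hcst : 0 < Real.Gamma (ν + 1) / (Real.sqrt π * Real.Gamma (ν + 1/2)) := by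
    apply div_pos (Real.Gamma_pos_of_pos (by linarith))
    exact mul_pos (Real.sqrt_pos.mpr pi_pos) (Real.Gamma_pos_of_pos (by linarith))
  have hne : ν ≠ -1/2 := ne_of_gt hν
  rw [jacobiPi, if_neg hne]
  have hmeas : Measurable fun s : ℝ => Real.toNNReal
      (Real.Gamma (ν + 1) / (Real.sqrt π * Real.Gamma (ν + 1/2)) * (1 - s ^ 2) ^ (ν - 1/2)) := by
    fun_prop

  rw [show (fun s : ℝ => ENNReal.ofReal
        (Real.Gamma (ν + 1) / (Real.sqrt π * Real.Gamma (ν + 1/2)) * (1 - s ^ 2) ^ (ν - 1/2)))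
      = (fun s : ℝ => ((Real.Gamma (ν + 1) / (Real.sqrt π * Real.Gamma (ν + 1/2))
        * (1 - s ^ 2) ^ (ν - 1/2)).toNNReal : ℝ≥0∞)) from rfl,
    integral_withDensity_eq_integral_smul hmeas f]
  refine setIntegral_congr_fun measurableSet_Icc ?_
  intro s hs
  have h0 : (0:ℝ) ≤ 1 - s ^ 2 := by nlinarith [hs.1, hs.2]
  simp only [NNReal.smul_def, smul_eq_mul]
  rw [Real.coe_toNNReal _ (mul_nonneg hcst.le (Real.rpow_nonneg h0 _))]


end Lem52

/-- Lemma 5.2 (integral estimate): for κ ≥ 0, γ > ν + 1/2 ≥ 0 and 0 < B < A < D,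
∫ (D-Bs)^{-κ}(A-Bs)^{-γ} dΠ_ν(s) ≃ (D-B)^{-κ} A^{-ν-1/2} (A-B)^{-(γ-ν-1/2)}. -/
theorem stmt1 (κ γ ν : ℝ) (hκ : 0 ≤ κ) (hν : 0 ≤ ν + 1/2) (hγ : ν + 1/2 < γ) :
    ∃ c C : ℝ, 0 < c ∧ 0 < C ∧ ∀ B A D : ℝ, 0 < B → B < A → A < D →
      c ≤ (∫ s, (D - B * s) ^ (-κ) * (A - B * s) ^ (-γ) ∂(jacobiPi ν)) *
            ((D - B) ^ κ * A ^ (ν + 1/2) * (A - B) ^ (γ - ν - 1/2)) ∧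
      (∫ s, (D - B * s) ^ (-κ) * (A - B * s) ^ (-γ) ∂(jacobiPi ν)) *
            ((D - B) ^ κ * A ^ (ν + 1/2) * (A - B) ^ (γ - ν - 1/2)) ≤ C := by
  rcases eq_or_lt_of_le hν with h0 | hpos
  · -- ν = -1/2 : Dirac case
    have hveq : ν = -1/2 := by linarith
    subst hveq
    have hγ0 : 0 < γ := by linarith
    refine ⟨1/2, 1, by norm_num, by norm_num, fun B A D hB hBA hAD => ?_⟩
    have hA : 0 < A := hB.trans hBA
    have ht : 0 < A - B := by linarith
    have hD : 0 < D - B := by linarith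
    have hDpB : 0 < D + B := by linarith
    have hApB : 0 < A + B := by linarith
    have hmeasf : Measurable fun s : ℝ => (D - B * s) ^ (-κ) * (A - B * s) ^ (-γ) := by
      fun_prop
    have hint : ∀ a : ℝ, Integrable (fun s : ℝ => (D - B * s) ^ (-κ) * (A - B * s) ^ (-γ))
        (Measure.dirac a) := by
      intro a
      refine Integrable.mono' (integrable_const ‖(D - B * a) ^ (-κ) * (A - B * a) ^ (-γ)‖)
        hmeasf.aestronglyMeasurable ?_
      rw [ae_dirac_eq]
      exact Filter.eventually_pure.mpr le_rfl
    have hval : (∫ s, (D - B * s) ^ (-κ) * (A - B * s) ^ (-γ) ∂(jacobiPi (-1/2)))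
        = (1/2) * ((D + B) ^ (-κ) * (A + B) ^ (-γ) + (D - B) ^ (-κ) * (A - B) ^ (-γ)) := by
      rw [jacobiPi, if_pos rfl, integral_smul_measure,
        integral_add_measure (hint (-1)) (hint 1), integral_dirac, integral_dirac]
      norm_num
    have hP0 : (-1/2 : ℝ) + 1/2 = 0 := by norm_num
    have hPγ : γ - (-1/2 : ℝ) - 1/2 = γ := by ring
    rw [hval, hP0, hPγ, Real.rpow_zero]
    have ey : (D - B) ^ (-κ) * (A - B) ^ (-γ) * ((D - B) ^ κ * (A - B) ^ γ) = 1 := by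
      rw [Real.rpow_neg hD.le, Real.rpow_neg ht.le]
      field_simp
    have ex0 : 0 ≤ (D + B) ^ (-κ) * (A + B) ^ (-γ) * ((D - B) ^ κ * (A - B) ^ γ) := by
      positivity
    have ex1 : (D + B) ^ (-κ) * (A + B) ^ (-γ) * ((D - B) ^ κ * (A - B) ^ γ) ≤ 1 := by
      have t1 : (D - B) ^ κ ≤ (D + B) ^ κ := Real.rpow_le_rpow hD.le (by linarith) hκ
      have t2 : (A - B) ^ γ ≤ (A + B) ^ γ := Real.rpow_le_rpow ht.le (by linarith) hγ0.le
      have e : (D + B) ^ (-κ) * (A + B) ^ (-γ) * ((D - B) ^ κ * (A - B) ^ γ)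
          = ((D - B) ^ κ / (D + B) ^ κ) * ((A - B) ^ γ / (A + B) ^ γ) := by
        rw [Real.rpow_neg (by linarith : (0:ℝ) ≤ D + B),
          Real.rpow_neg (by linarith : (0:ℝ) ≤ A + B)]
        ring
      rw [e]
      exact mul_le_one₀ ((div_le_one (Real.rpow_pos_of_pos hDpB _)).mpr t1)
        (by positivity) ((div_le_one (Real.rpow_pos_of_pos hApB _)).mpr t2)
    constructor
    · nlinarith [ex0, ex1, ey]
    · nlinarith [ex0, ex1, ey]
  · -- ν > -1/2
    have hνgt : -1/2 < ν := by linarith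
    obtain ⟨c, C, hc, hC, hmain⟩ := Lem52.key κ γ (ν - 1/2) hκ (by linarith) (by linarith)
    have hcst : 0 < Real.Gamma (ν + 1) / (Real.sqrt π * Real.Gamma (ν + 1/2)) := by
      apply div_pos (Real.Gamma_pos_of_pos (by linarith))
      exact mul_pos (Real.sqrt_pos.mpr pi_pos) (Real.Gamma_pos_of_pos (by linarith))
    refine ⟨Real.Gamma (ν + 1) / (Real.sqrt π * Real.Gamma (ν + 1/2)) * c,
      Real.Gamma (ν + 1) / (Real.sqrt π * Real.Gamma (ν + 1/2)) * C,
      by positivity, by positivity, fun B A D hB hBA hAD => ?_⟩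
    obtain ⟨h1, h2⟩ := hmain B A D hB hBA hAD
    have hconv : (∫ s, (D - B * s) ^ (-κ) * (A - B * s) ^ (-γ) ∂(jacobiPi ν))
        = Real.Gamma (ν + 1) / (Real.sqrt π * Real.Gamma (ν + 1/2))
          * ∫ s in Set.Icc (-1:ℝ) 1,
            (1 - s ^ 2) ^ (ν - 1/2) * ((D - B * s) ^ (-κ) * (A - B * s) ^ (-γ)) := by
      rw [Lem52.integral_jacobi ν hνgt, ← integral_const_mul]
      congr 1
      funext s
      ring
    have hexp1 : ν + 1/2 = (ν - 1/2) + 1 := by ring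
    have hexp2 : γ - ν - 1/2 = γ - (ν - 1/2) - 1 := by ring
    rw [← hexp1, ← hexp2] at h1 h2
    rw [hconv]
    constructor
    · calc Real.Gamma (ν + 1) / (Real.sqrt π * Real.Gamma (ν + 1/2)) * c
          ≤ Real.Gamma (ν + 1) / (Real.sqrt π * Real.Gamma (ν + 1/2))
            * ((∫ s in Set.Icc (-1:ℝ) 1,
              (1 - s ^ 2) ^ (ν - 1/2) * ((D - B * s) ^ (-κ) * (A - B * s) ^ (-γ)))
              * ((D - B) ^ κ * A ^ (ν + 1/2) * (A - B) ^ (γ - ν - 1/2))) :=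
            mul_le_mul_of_nonneg_left h1 hcst.le
        _ = _ := by ring
    · calc Real.Gamma (ν + 1) / (Real.sqrt π * Real.Gamma (ν + 1/2))
            * (∫ s in Set.Icc (-1:ℝ) 1,
              (1 - s ^ 2) ^ (ν - 1/2) * ((D - B * s) ^ (-κ) * (A - B * s) ^ (-γ)))
            * ((D - B) ^ κ * A ^ (ν + 1/2) * (A - B) ^ (γ - ν - 1/2))
          = Real.Gamma (ν + 1) / (Real.sqrt π * Real.Gamma (ν + 1/2))
            * ((∫ s in Set.Icc (-1:ℝ) 1,
              (1 - s ^ 2) ^ (ν - 1/2) * ((D - B * s) ^ (-κ) * (A - B * s) ^ (-γ)))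
              * ((D - B) ^ κ * A ^ (ν + 1/2) * (A - B) ^ (γ - ν - 1/2))) := by ring
        _ ≤ _ := mul_le_mul_of_nonneg_left h2 hcst.le
end

section
/- For α > -1, T > 0 fixed, the Laguerre heat kernel K_t^α(x,y) = (1/(2 sinh t)) exp(-(1/4) coth t (x²+y²)) (xy)^{-α} I_α(xy/(2 sinh t)) satisfies, uniformly in x, y ∈ (0, 3π/4) and 0 < t ≤ T: K_t^α(x,y) ≃≃ (t + xy)^{-α-1/2} t^{-1/2} exp(-c(x-y)²/t), i.e., there exist positive constants C, c₁, c₂ depending only on α, T such that (1/C)(t+xy)^{-α-1/2} t^{-1/2} e^{-c₁(x-y)²/t} ≤ K_t^α(x,y) ≤ C(t+xy)^{-α-1/2} t^{-1/2} e^{-c₂(x-y)²/t}. -/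
set_option maxHeartbeats 1000000

open Real

private lemma sinh_le_mul_cosh {x : ℝ} (hx : 0 ≤ x) : Real.sinh x ≤ x * Real.cosh x := by
  have h : ∀ y ∈ Set.Ici (0:ℝ), ∀ z ∈ Set.Ici (0:ℝ), y ≤ z →
      z * Real.cosh z - Real.sinh z - (y * Real.cosh y - Real.sinh y) ≥ 0 := by
    intro y hy z hz hyz
    have hm : MonotoneOn (fun u => u * Real.cosh u - Real.sinh u) (Set.Ici (0:ℝ)) := by
      apply monotoneOn_of_deriv_nonneg (convex_Ici _)
      · exact ((continuous_id.mul Real.continuous_cosh).sub Real.continuous_sinh).continuousOn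
      · intro u hu
        exact (((differentiableAt_id.mul Real.differentiable_cosh.differentiableAt).sub
          Real.differentiable_sinh.differentiableAt)).differentiableWithinAt
      · intro u hu
        rw [interior_Ici, Set.mem_Ioi] at hu
        have : deriv (fun u => u * Real.cosh u - Real.sinh u) u = u * Real.sinh u := by
          have h1 : HasDerivAt (fun u : ℝ => u * Real.cosh u - Real.sinh u)
              (1 * Real.cosh u + u * Real.sinh u - Real.cosh u) u := by
            exact ((hasDerivAt_id u).mul (Real.hasDerivAt_cosh u)).sub (Real.hasDerivAt_sinh u)
          rw [h1.deriv]; ring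
        rw [this]
        positivity
    have := hm hy hz hyz
    simp only at this
    simp only [ge_iff_le, sub_nonneg]
    linarith [this]
  have := h 0 (by simp) x hx hx
  simp at this
  linarith

private lemma cosh_sub_one_le {x : ℝ} (hx : 0 ≤ x) : Real.cosh x - 1 ≤ x * Real.sinh x := by
  have h1 : Real.cosh x = 2 * Real.cosh (x/2) ^ 2 - 1 := by
    have h := Real.cosh_two_mul (x/2)
    have : (2:ℝ) * (x/2) = x := by ring
    rw [this] at h
    have h3 := Real.cosh_sq (x/2)
    linarith
  have h2 : Real.sinh x = 2 * Real.sinh (x/2) * Real.cosh (x/2) := by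
    have h := Real.sinh_two_mul (x/2)
    have : (2:ℝ) * (x/2) = x := by ring
    rw [this] at h
    linarith
  have h3 : Real.cosh (x/2) ^ 2 = Real.sinh (x/2) ^ 2 + 1 := Real.cosh_sq (x/2)
  have h4 : Real.sinh (x/2) ≤ (x/2) * Real.cosh (x/2) := sinh_le_mul_cosh (by linarith)
  have h5 : 0 ≤ Real.sinh (x/2) := by simpa using (by linarith : (0:ℝ) ≤ x/2)
  nlinarith [Real.one_le_cosh (x/2)]

private lemma ratio_rpow {u v D q : ℝ} (hv : 0 < v) (h1 : v ≤ u) (h2 : u ≤ D * v) :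
    u ^ q ≤ D ^ |q| * v ^ q ∧ v ^ q ≤ D ^ |q| * u ^ q := by
  have hu : 0 < u := hv.trans_le h1
  have hD1 : 1 ≤ D := by
    rw [← mul_le_mul_iff_of_pos_right hv]; calc (1:ℝ) * v = v := one_mul v
    _ ≤ u := h1
    _ ≤ D * v := h2
  have hD0 : 0 < D := by linarith
  have hDq1 : 1 ≤ D ^ |q| := Real.one_le_rpow hD1 (abs_nonneg q)
  rcases le_total 0 q with hq | hq
  · have habs : |q| = q := abs_of_nonneg hq
    constructor
    · calc u ^ q ≤ (D * v) ^ q := Real.rpow_le_rpow hu.le h2 hq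
        _ = D ^ q * v ^ q := Real.mul_rpow hD0.le hv.le
        _ = D ^ |q| * v ^ q := by rw [habs]
    · calc v ^ q ≤ u ^ q := Real.rpow_le_rpow hv.le h1 hq
        _ ≤ D ^ |q| * u ^ q := le_mul_of_one_le_left (Real.rpow_pos_of_pos hu q).le hDq1
  · have habs : |q| = -q := abs_of_nonpos hq
    constructor
    · calc u ^ q ≤ v ^ q := Real.rpow_le_rpow_of_nonpos hv h1 hq
        _ ≤ D ^ |q| * v ^ q := le_mul_of_one_le_left (Real.rpow_pos_of_pos hv q).le hDq1
    · calc v ^ q ≤ (u / D) ^ q := by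
            apply Real.rpow_le_rpow_of_nonpos (by positivity) _ hq
            rw [div_le_iff₀ hD0]; linarith [h2, mul_comm D v]
        _ = u ^ q / D ^ q := Real.div_rpow hu.le hD0.le q
        _ = D ^ |q| * u ^ q := by
            rw [habs, Real.rpow_neg hD0.le, div_eq_mul_inv, mul_comm]

private lemma mul_le_mul4 {a b c d a' b' c' d' : ℝ} (h1 : a ≤ a') (h2 : b ≤ b')
    (h3 : c ≤ c') (h4 : d ≤ d') (hb : 0 ≤ b) (hc : 0 ≤ c) (hd : 0 ≤ d)
    (ha' : 0 ≤ a') (hb' : 0 ≤ b') (hc' : 0 ≤ c') : a*b*c*d ≤ a'*b'*c'*d' := by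
  have h12 : a*b ≤ a'*b' := mul_le_mul h1 h2 hb ha'
  have h123 : a*b*c ≤ a'*b'*c' := mul_le_mul h12 h3 hc (by positivity)
  exact mul_le_mul h123 h4 hd (by positivity)

/-- Sharp estimates for the Laguerre heat kernel
K_t^α(x,y) = (2 sinh t)^{-1} exp(-(1/4)coth t (x²+y²)) (xy)^{-α} I_α(xy/(2 sinh t)),
where I_α is the modified Bessel function of the first kind (characterized here by its
standard asymptotics at 0 and ∞): uniformly in x, y ∈ (0,3π/4) and 0 < t ≤ T,
K_t^α(x,y) ≃≃ (t+xy)^{-α-1/2} t^{-1/2} exp(-c(x-y)²/t). -/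
theorem stmt17 (a T : ℝ) (ha : -1 < a) (hT : 0 < T)
    (I : ℝ → ℝ) (k₁ k₂ : ℝ) (hk₁ : 0 < k₁) (hk₂ : 0 < k₂)
    (hI0 : ∀ z : ℝ, 0 < z → z ≤ 1 → k₁ * z ^ a ≤ I z ∧ I z ≤ k₂ * z ^ a)
    (hIinf : ∀ z : ℝ, 1 ≤ z →
      k₁ * z ^ (-(1/2 : ℝ)) * Real.exp z ≤ I z ∧ I z ≤ k₂ * z ^ (-(1/2 : ℝ)) * Real.exp z) :
    ∃ C c₁ c₂ : ℝ, 0 < C ∧ 0 < c₁ ∧ 0 < c₂ ∧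
      ∀ x y t : ℝ, x ∈ Set.Ioo 0 (3 * π / 4) → y ∈ Set.Ioo 0 (3 * π / 4) → 0 < t → t ≤ T →
        (1/C) * (t + x * y) ^ (-a - 1/2) * t ^ (-(1/2 : ℝ)) * Real.exp (-c₁ * (x - y) ^ 2 / t) ≤
          1 / (2 * Real.sinh t) *
            Real.exp (-(1/4) * (Real.cosh t / Real.sinh t) * (x ^ 2 + y ^ 2)) *
            (x * y) ^ (-a) * I (x * y / (2 * Real.sinh t)) ∧
        1 / (2 * Real.sinh t) *
            Real.exp (-(1/4) * (Real.cosh t / Real.sinh t) * (x ^ 2 + y ^ 2)) *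
            (x * y) ^ (-a) * I (x * y / (2 * Real.sinh t)) ≤
          C * (t + x * y) ^ (-a - 1/2) * t ^ (-(1/2 : ℝ)) * Real.exp (-c₂ * (x - y) ^ 2 / t) := by
  have hchT1 : 1 ≤ Real.cosh T := Real.one_le_cosh T
  have hchT0 : 0 < Real.cosh T := by linarith
  set B0 : ℝ := 2 + 2 * Real.cosh T with hB0def
  have hB0pos : 0 < B0 := by positivity
  have hB0 : 1 ≤ B0 := by simp only [hB0def]; linarith
  set Q : ℝ := |a + 1| + |a + 1/2| + 1 with hQdef
  have hQ0 : 0 ≤ Q := by positivity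
  set E₁ : ℝ := B0 ^ Q with hE1def
  set E₂ : ℝ := Real.exp (Real.cosh T ^ 2 + 3 * T) with hE2def
  have hE₁0 : 0 < E₁ := Real.rpow_pos_of_pos hB0pos Q
  have hE₁1 : 1 ≤ E₁ := Real.one_le_rpow hB0 hQ0
  have hE₂0 : 0 < E₂ := Real.exp_pos _
  have hE₂1 : 1 ≤ E₂ := Real.one_le_exp (by positivity)
  set C : ℝ := (k₂ + k₁⁻¹) * E₁ * E₂ with hCdef
  have hC0 : 0 < C := by positivity
  have hup : ∀ p1 p2 : ℝ, 0 ≤ p1 → 0 ≤ p2 → p1 + p2 ≤ Q →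
      (2 * Real.cosh T) ^ p1 * B0 ^ p2 ≤ E₁ := by
    intro p1 p2 hp1 hp2 hpQ
    have hA : (2 * Real.cosh T) ^ p1 ≤ B0 ^ p1 :=
      Real.rpow_le_rpow (by positivity) (by simp only [hB0def]; linarith) hp1
    calc (2 * Real.cosh T) ^ p1 * B0 ^ p2 ≤ B0 ^ p1 * B0 ^ p2 :=
          mul_le_mul_of_nonneg_right hA (Real.rpow_pos_of_pos hB0pos _).le
      _ = B0 ^ (p1 + p2) := (Real.rpow_add hB0pos _ _).symm
      _ ≤ B0 ^ Q := Real.rpow_le_rpow_of_exponent_le hB0 hpQ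
  have hCk₂ : ∀ X : ℝ, X ≤ E₁ → k₂ * X ≤ C := by
    intro X hX
    calc k₂ * X ≤ k₂ * E₁ := mul_le_mul_of_nonneg_left hX hk₂.le
      _ = k₂ * E₁ * 1 := (mul_one _).symm
      _ ≤ (k₂ + k₁⁻¹) * E₁ * E₂ := by
          apply mul_le_mul _ hE₂1 zero_le_one (by positivity)
          exact mul_le_mul_of_nonneg_right (le_add_of_nonneg_right (by positivity)) hE₁0.le
      _ = C := hCdef.symm
  have hLow : (1:ℝ)/C * (E₁ * E₂) ≤ k₁ := by
    rw [div_mul_eq_mul_div, one_mul, div_le_iff₀ hC0, hCdef]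
    have h2 : k₁ * ((k₂ + k₁⁻¹) * E₁ * E₂) = (k₁*k₂)*(E₁*E₂) + (E₁*E₂) := by
      field_simp
    rw [h2]
    linarith [mul_pos (mul_pos hk₁ hk₂) (mul_pos hE₁0 hE₂0)]
  have hscalgen : ∀ p1 p2 : ℝ, 0 ≤ p1 → 0 ≤ p2 → p1 + p2 ≤ Q →
      1/C * (B0 ^ p2 * ((2*Real.cosh T) ^ p1 * E₂)) ≤ k₁ := by
    intro p1 p2 hp1 hp2 hpQ
    have h1 : (2*Real.cosh T)^p1 * B0^p2 ≤ E₁ := hup p1 p2 hp1 hp2 hpQ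
    have h2 : B0^p2 * ((2*Real.cosh T)^p1 * E₂) ≤ E₁ * E₂ := by
      calc B0^p2 * ((2*Real.cosh T)^p1 * E₂) = ((2*Real.cosh T)^p1 * B0^p2) * E₂ := by ring
        _ ≤ E₁ * E₂ := mul_le_mul_of_nonneg_right h1 hE₂0.le
    calc 1/C * (B0^p2 * ((2*Real.cosh T)^p1 * E₂)) ≤ 1/C * (E₁*E₂) :=
          mul_le_mul_of_nonneg_left h2 (by positivity)
      _ ≤ k₁ := hLow
  refine ⟨C, Real.cosh T / 4, 1/4, hC0, by positivity, by norm_num, ?_⟩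
  intro x y t hx hy ht htT
  obtain ⟨hx0, hx4⟩ := hx
  obtain ⟨hy0, hy4⟩ := hy
  set s := Real.sinh t with hsdef
  set ch := Real.cosh t with hchdef
  set P := x * y with hPdef
  have hs0 : 0 < s := Real.sinh_pos_iff.mpr ht
  have hts : t ≤ s := Real.self_le_sinh_iff.mpr ht.le
  have h2s : 0 < 2 * s := by linarith
  have hch1 : 1 ≤ ch := Real.one_le_cosh t
  have hchle : ch ≤ Real.cosh T := by
    rw [hchdef]
    exact Real.cosh_le_cosh.mpr (by rw [abs_of_pos ht, abs_of_pos hT]; exact htT)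
  have hsch : s ≤ t * ch := sinh_le_mul_cosh ht.le
  have hsT : s ≤ t * Real.cosh T := hsch.trans (mul_le_mul_of_nonneg_left hchle ht.le)
  have hcm1 : ch - 1 ≤ t * s := cosh_sub_one_le ht.le
  have hP0 : 0 < P := mul_pos hx0 hy0
  have hpi : π ≤ 3.15 := by
    have := Real.pi_lt_d2
    linarith
  have hx24 : x < 2.4 := by linarith
  have hy24 : y < 2.4 := by linarith
  have hP6 : P < 6 := by
    rw [hPdef]
    have h1 : x*y ≤ 2.4*y := mul_le_mul_of_nonneg_right hx24.le hy0.le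
    have h2 : (2.4:ℝ)*y < 2.4*2.4 := by
      have := mul_lt_mul_of_pos_left hy24 (show (0:ℝ) < 2.4 by norm_num)
      linarith
    linarith
  have hcothl : 1/t ≤ ch / s := by rw [div_le_div_iff₀ ht hs0]; linarith [hsch]
  have hcothu : ch / s ≤ Real.cosh T / t := by
    rw [div_le_div_iff₀ hs0 ht]
    have h1 : ch*t ≤ Real.cosh T * t := mul_le_mul_of_nonneg_right hchle ht.le
    have h2 : Real.cosh T * t ≤ Real.cosh T * s := mul_le_mul_of_nonneg_left hts hchT0.le
    linarith
  have hts2 : t ≤ 2 * s := by linarith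
  have hs2D : 2 * s ≤ (2 * Real.cosh T) * t := by linarith [hsT]
  have habs1 : |(-a-1 : ℝ)| = |a+1| := by rw [show (-a-1:ℝ) = -(a+1) by ring, abs_neg]
  have habs2 : |(-a-1/2 : ℝ)| = |a+1/2| := by rw [show (-a-1/2:ℝ) = -(a+1/2) by ring, abs_neg]
  have habs3 : |(-(1/2):ℝ)| = (1/2:ℝ) := by rw [abs_neg]; exact abs_of_nonneg (by norm_num)
  have htP0 : 0 < t + P := by linarith
  have hBT1 : 0 < (t+P)^(-a-1/2:ℝ) := Real.rpow_pos_of_pos htP0 _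
  have hBT2 : 0 < t^(-(1/2):ℝ) := Real.rpow_pos_of_pos ht _
  have hsplit : t^(-a-1:ℝ) = t^(-a-1/2:ℝ) * t^(-(1/2):ℝ) := by
    rw [← Real.rpow_add ht]; congr 1; ring
  set z := P / (2*s) with hzdef
  set G := -(1/4) * (ch / s) * (x ^ 2 + y ^ 2) with hGdef
  have hr1 := ratio_rpow (q := -a-1) ht hts2 hs2D
  rw [habs1] at hr1
  have htE : t ≤ t + P := by linarith
  have hxy2 : (x-y)^2 ≤ x^2 + y^2 := by linarith [mul_pos hx0 hy0]
  -- ratio bound for (t+P) vs t (needs P ≤ 2s, case 1 only) established inside cases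
  rcases le_or_gt z 1 with hzle | hzgt
  · -- CASE 1 : z ≤ 1
    have hz0 : 0 < z := div_pos hP0 h2s
    obtain ⟨hIl, hIu⟩ := hI0 z hz0 hzle
    have hPz : P ≤ 2*s := by
      have := (div_le_one h2s).mp hzle
      linarith
    have htPD : t + P ≤ B0 * t := by simp only [hB0def]; linarith [hPz, hsT, ht.le]
    have hr2 := ratio_rpow (q := -a-1/2) ht htE htPD
    rw [habs2] at hr2
    have hid1 : 1/(2*s) * (P^(-a) * z^a) = (2*s)^(-a-1:ℝ) := by
      rw [hzdef, Real.div_rpow hP0.le h2s.le, Real.rpow_neg hP0.le,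
        show (-a-1:ℝ) = (-a) + (-1) by ring, Real.rpow_add h2s, Real.rpow_neg_one,
        Real.rpow_neg h2s.le]
      have hn1 : (P:ℝ)^a ≠ 0 := (Real.rpow_pos_of_pos hP0 a).ne'
      have hn2 : ((2*s):ℝ)^a ≠ 0 := (Real.rpow_pos_of_pos h2s a).ne'
      field_simp
    have hgu : G ≤ -(1/4) * (x-y)^2 / t := by
      have h1 : (x-y)^2 / t ≤ (ch/s) * (x^2+y^2) := by
        calc (x-y)^2/t = (1/t) * (x-y)^2 := by ring
          _ ≤ (ch/s) * (x-y)^2 := mul_le_mul_of_nonneg_right hcothl (sq_nonneg _)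
          _ ≤ (ch/s) * (x^2+y^2) := mul_le_mul_of_nonneg_left hxy2 (by positivity)
      rw [hGdef]
      ring_nf at h1 ⊢
      linarith
    have hgl : -(Real.cosh T/4) * (x-y)^2 / t - (Real.cosh T^2 + 3*T) ≤ G := by
      have e0 : x^2 + y^2 = (x-y)^2 + 2*P := by rw [hPdef]; ring
      have h1 : (ch/s) * (x^2+y^2) ≤ (Real.cosh T / t) * ((x-y)^2 + 2*P) := by
        rw [e0]
        exact mul_le_mul hcothu le_rfl (by positivity) (by positivity)
      have h2 : (Real.cosh T / t) * (2*P) ≤ 4 * Real.cosh T^2 := by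
        rw [div_mul_eq_mul_div, div_le_iff₀ ht]
        have h3 : Real.cosh T * P ≤ Real.cosh T * (2*s) := mul_le_mul_of_nonneg_left hPz hchT0.le
        have h4 : Real.cosh T * s ≤ Real.cosh T * (t * Real.cosh T) :=
          mul_le_mul_of_nonneg_left hsT hchT0.le
        linarith [h3, h4]
      have e2 : (Real.cosh T/4) * (x-y)^2 / t = (1/4) * ((Real.cosh T / t) * (x-y)^2) := by ring
      have e3 : (Real.cosh T / t) * ((x-y)^2 + 2*P)
          = (Real.cosh T / t) * (x-y)^2 + (Real.cosh T / t) * (2*P) := by ring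
      rw [hGdef]
      ring_nf at h1 h2 ⊢
      linarith [hT]
    constructor
    · -- lower bound, case 1
      have hge : Real.exp (-(Real.cosh T/4) * (x-y)^2/t) ≤ E₂ * Real.exp G := by
        rw [hE2def, ← Real.exp_add]
        exact Real.exp_le_exp.mpr (by linarith)
      have hscal : 1/C * (B0^|a+1/2| * ((2*Real.cosh T)^|a+1| * E₂)) ≤ k₁ :=
        hscalgen |a+1| |a+1/2| (abs_nonneg _) (abs_nonneg _) (by rw [hQdef]; linarith)
      calc 1/C * (t+P)^(-a-1/2:ℝ) * t^(-(1/2):ℝ) * Real.exp (-(Real.cosh T/4) * (x-y)^2/t)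
          ≤ 1/C * (B0^|a+1/2| * t^(-a-1/2:ℝ)) * t^(-(1/2):ℝ) * (E₂ * Real.exp G) :=
            mul_le_mul4 le_rfl hr2.1 le_rfl hge hBT1.le hBT2.le (Real.exp_pos _).le
              (by positivity) (by positivity) (by positivity)
        _ = 1/C * B0^|a+1/2| * E₂ * (t^(-a-1:ℝ)) * Real.exp G := by rw [hsplit]; ring
        _ ≤ 1/C * B0^|a+1/2| * E₂ * ((2*Real.cosh T)^|a+1| * (2*s)^(-a-1:ℝ)) * Real.exp G := by
            apply mul_le_mul_of_nonneg_right
              (mul_le_mul_of_nonneg_left hr1.2 (by positivity)) (Real.exp_pos _).le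
        _ = (1/C * (B0^|a+1/2| * ((2*Real.cosh T)^|a+1| * E₂))) *
              ((2*s)^(-a-1:ℝ) * Real.exp G) := by ring
        _ ≤ k₁ * ((2*s)^(-a-1:ℝ) * Real.exp G) :=
            mul_le_mul_of_nonneg_right hscal (by positivity)
        _ = 1/(2*s) * Real.exp G * P^(-a) * (k₁ * z^a) := by rw [← hid1]; ring
        _ ≤ 1/(2*s) * Real.exp G * P^(-a) * I z :=
            mul_le_mul_of_nonneg_left hIl (by positivity)
    · -- upper bound, case 1
      calc 1/(2*s) * Real.exp G * P^(-a) * I z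
          ≤ 1/(2*s) * Real.exp G * P^(-a) * (k₂ * z^a) :=
            mul_le_mul_of_nonneg_left hIu (by positivity)
        _ = k₂ * (1/(2*s) * (P^(-a) * z^a)) * Real.exp G := by ring
        _ = k₂ * (2*s)^(-a-1:ℝ) * Real.exp G := by rw [hid1]
        _ ≤ k₂ * ((2*Real.cosh T)^|a+1| * t^(-a-1:ℝ)) * Real.exp (-(1/4) * (x-y)^2 / t) :=
            mul_le_mul (mul_le_mul_of_nonneg_left hr1.1 hk₂.le) (Real.exp_le_exp.mpr hgu)
              (Real.exp_pos _).le (by positivity)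
        _ = k₂ * (2*Real.cosh T)^|a+1| * (t^(-a-1/2:ℝ) * t^(-(1/2):ℝ)) *
              Real.exp (-(1/4) * (x-y)^2 / t) := by rw [hsplit]; ring
        _ ≤ k₂ * (2*Real.cosh T)^|a+1| * ((B0^|a+1/2| * (t+P)^(-a-1/2:ℝ)) * t^(-(1/2):ℝ)) *
              Real.exp (-(1/4) * (x-y)^2 / t) := by
            apply mul_le_mul_of_nonneg_right _ (Real.exp_pos _).le
            exact mul_le_mul_of_nonneg_left
              (mul_le_mul_of_nonneg_right hr2.2 hBT2.le) (by positivity)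
        _ = (k₂ * ((2*Real.cosh T)^|a+1| * B0^|a+1/2|)) * (t+P)^(-a-1/2:ℝ) * t^(-(1/2):ℝ) *
              Real.exp (-(1/4) * (x-y)^2 / t) := by ring
        _ ≤ C * (t+P)^(-a-1/2:ℝ) * t^(-(1/2):ℝ) * Real.exp (-(1/4) * (x-y)^2 / t) := by
            have hc := hCk₂ _ (hup |a+1| |a+1/2| (abs_nonneg _) (abs_nonneg _)
              (by rw [hQdef]; linarith))
            apply mul_le_mul_of_nonneg_right _ (Real.exp_pos _).le
            apply mul_le_mul_of_nonneg_right _ hBT2.le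
            exact mul_le_mul_of_nonneg_right hc hBT1.le
  · -- CASE 2 : 1 < z
    have hz1 : 1 ≤ z := hzgt.le
    obtain ⟨hIl, hIu⟩ := hIinf z hz1
    have h2sP : 2*s < P := by
      have := (one_lt_div h2s).mp hzgt
      linarith
    have h2tP : 2*t ≤ P := by linarith
    have htPD2 : t + P ≤ B0 * P := by
      simp only [hB0def]
      linarith [h2tP, hP0.le, mul_le_mul_of_nonneg_right hchT1 hP0.le]
    have hPE : P ≤ t + P := by linarith
    have hr4 := ratio_rpow (q := -a-1/2) hP0 hPE htPD2
    rw [habs2] at hr4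
    have hr3 := ratio_rpow (q := -(1/2:ℝ)) ht hts2 hs2D
    rw [habs3] at hr3
    have hid2 : 1/(2*s) * (P^(-a) * z^(-(1/2:ℝ))) = (2*s)^(-(1/2):ℝ) * P^(-a-1/2:ℝ) := by
      have e1 : z^(-(1/2:ℝ)) = P^(-(1/2:ℝ)) / (2*s)^(-(1/2:ℝ)) := by
        rw [hzdef]; exact Real.div_rpow hP0.le h2s.le _
      have e2 : P^(-a-1/2:ℝ) = P^(-a) * P^(-(1/2:ℝ)) := by
        rw [← Real.rpow_add hP0]; congr 1 <;> ring
      have e3 : (2*s)^(-(1/2):ℝ) * (2*s)^(-(1/2):ℝ) = (2*s)^(-(1:ℝ)) := by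
        rw [← Real.rpow_add h2s]; congr 1 <;> ring
      have e4 : (2*s)^(-(1:ℝ)) = 1/(2*s) := by rw [Real.rpow_neg_one, one_div]
      have hpos : (0:ℝ) < (2*s)^(-(1/2):ℝ) := Real.rpow_pos_of_pos h2s _
      calc 1/(2*s) * (P^(-a) * z^(-(1/2:ℝ)))
          = (P^(-a) * P^(-(1/2:ℝ))) * (1/(2*s) / (2*s)^(-(1/2):ℝ)) := by rw [e1]; ring
        _ = (P^(-a) * P^(-(1/2:ℝ))) * (2*s)^(-(1/2):ℝ) := by
            rw [← e4, ← e3, mul_div_cancel_right₀ _ hpos.ne']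
        _ = (2*s)^(-(1/2):ℝ) * P^(-a-1/2:ℝ) := by rw [e2]; ring
    have hEid : G + z = -(ch/(4*s))*(x-y)^2 - P*(ch-1)/(2*s) := by
      rw [hGdef, hzdef, hPdef]
      field_simp
      ring
    have hgu2 : G + z ≤ -(1/4) * (x-y)^2 / t := by
      have h1 : (x-y)^2 / t ≤ (ch/s) * (x-y)^2 := by
        calc (x-y)^2/t = (1/t) * (x-y)^2 := by ring
          _ ≤ (ch/s) * (x-y)^2 := mul_le_mul_of_nonneg_right hcothl (sq_nonneg _)
      have h2 : 0 ≤ P*(ch-1)/(2*s) := div_nonneg (mul_nonneg hP0.le (by linarith)) h2s.le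
      have e5 : (ch/(4*s))*(x-y)^2 = (1/4) * ((ch/s) * (x-y)^2) := by ring
      rw [hEid]
      ring_nf at h1 h2 ⊢
      linarith
    have hgl2 : -(Real.cosh T/4) * (x-y)^2 / t - (Real.cosh T^2 + 3*T) ≤ G + z := by
      have h1 : (ch/s)*(x-y)^2 ≤ (Real.cosh T/t)*(x-y)^2 :=
        mul_le_mul_of_nonneg_right hcothu (sq_nonneg _)
      have h2 : P*(ch-1)/(2*s) ≤ P*t/2 := by
        rw [div_le_div_iff₀ h2s two_pos]
        have h2' : P*(ch-1) ≤ P*(t*s) := mul_le_mul_of_nonneg_left hcm1 hP0.le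
        linarith [h2']
      have h3 : P*t/2 ≤ 3*T := by
        have h3' : P*t ≤ 6*t := mul_le_mul_of_nonneg_right hP6.le ht.le
        have h3'' : (6:ℝ)*t ≤ 6*T := by linarith
        linarith
      have e5 : (ch/(4*s))*(x-y)^2 = (1/4) * ((ch/s) * (x-y)^2) := by ring
      have e6 : (Real.cosh T/4) * (x-y)^2 / t = (1/4) * ((Real.cosh T/t)*(x-y)^2) := by ring
      rw [hEid]
      ring_nf at h1 h2 h3 ⊢
      linarith [sq_nonneg (Real.cosh T)]
    constructor
    · -- lower bound, case 2
      have hge2 : Real.exp (-(Real.cosh T/4) * (x-y)^2/t) ≤ E₂ * Real.exp (G + z) := by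
        rw [hE2def, ← Real.exp_add]
        exact Real.exp_le_exp.mpr (by linarith)
      have hscal2 : 1/C * (B0^|a+1/2| * ((2*Real.cosh T)^(1/2:ℝ) * E₂)) ≤ k₁ :=
        hscalgen (1/2) |a+1/2| (by norm_num) (abs_nonneg _)
          (by rw [hQdef]; have := abs_nonneg (a+1); linarith)
      calc 1/C * (t+P)^(-a-1/2:ℝ) * t^(-(1/2):ℝ) * Real.exp (-(Real.cosh T/4) * (x-y)^2/t)
          ≤ 1/C * (B0^|a+1/2| * P^(-a-1/2:ℝ)) * ((2*Real.cosh T)^(1/2:ℝ) * (2*s)^(-(1/2):ℝ)) *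
              (E₂ * Real.exp (G + z)) :=
            mul_le_mul4 le_rfl hr4.1 hr3.2 hge2 hBT1.le hBT2.le (Real.exp_pos _).le
              (by positivity) (by positivity) (by positivity)
        _ = (1/C * (B0^|a+1/2| * ((2*Real.cosh T)^(1/2:ℝ) * E₂))) *
              ((2*s)^(-(1/2):ℝ) * P^(-a-1/2:ℝ) * Real.exp (G + z)) := by ring
        _ ≤ k₁ * ((2*s)^(-(1/2):ℝ) * P^(-a-1/2:ℝ) * Real.exp (G + z)) :=
            mul_le_mul_of_nonneg_right hscal2 (by positivity)
        _ = 1/(2*s) * Real.exp G * P^(-a) * (k₁ * z^(-(1/2:ℝ)) * Real.exp z) := by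
            rw [Real.exp_add, ← hid2]; ring
        _ ≤ 1/(2*s) * Real.exp G * P^(-a) * I z :=
            mul_le_mul_of_nonneg_left hIl (by positivity)
    · -- upper bound, case 2
      calc 1/(2*s) * Real.exp G * P^(-a) * I z
          ≤ 1/(2*s) * Real.exp G * P^(-a) * (k₂ * z^(-(1/2:ℝ)) * Real.exp z) :=
            mul_le_mul_of_nonneg_left hIu (by positivity)
        _ = k₂ * (1/(2*s) * (P^(-a) * z^(-(1/2:ℝ)))) * (Real.exp G * Real.exp z) := by ring
        _ = k₂ * ((2*s)^(-(1/2):ℝ) * P^(-a-1/2:ℝ)) * Real.exp (G + z) := by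
            rw [hid2, Real.exp_add]
        _ ≤ k₂ * (((2*Real.cosh T)^(1/2:ℝ) * t^(-(1/2):ℝ)) *
              (B0^|a+1/2| * (t+P)^(-a-1/2:ℝ))) * Real.exp (-(1/4) * (x-y)^2 / t) := by
            apply mul_le_mul _ (Real.exp_le_exp.mpr hgu2) (Real.exp_pos _).le (by positivity)
            apply mul_le_mul_of_nonneg_left _ hk₂.le
            exact mul_le_mul hr3.1 hr4.2 (Real.rpow_pos_of_pos hP0 _).le (by positivity)
        _ = (k₂ * ((2*Real.cosh T)^(1/2:ℝ) * B0^|a+1/2|)) * (t+P)^(-a-1/2:ℝ) * t^(-(1/2):ℝ) *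
              Real.exp (-(1/4) * (x-y)^2 / t) := by ring
        _ ≤ C * (t+P)^(-a-1/2:ℝ) * t^(-(1/2):ℝ) * Real.exp (-(1/4) * (x-y)^2 / t) := by
            have hc := hCk₂ _ (hup (1/2) |a+1/2| (by norm_num) (abs_nonneg _)
              (by rw [hQdef]; have := abs_nonneg (a+1); linarith))
            apply mul_le_mul_of_nonneg_right _ (Real.exp_pos _).le
            apply mul_le_mul_of_nonneg_right _ hBT2.le
            exact mul_le_mul_of_nonneg_right hc hBT1.le
end

section
/- Let α, β ≥ -1/2 and T > 0. Then the Poisson–Jacobi kernel satisfies ℋ_t^{(α,β)}(θ,φ) ≃ exp(-t(α+β+1)/2) uniformly in θ, φ ∈ [0,π] and t ≥ T; that is, there exist positive constants c, C depending only on α, β, T such that c·e^{-t(α+β+1)/2} ≤ ℋ_t^{(α,β)}(θ,φ) ≤ C·e^{-t(α+β+1)/2} for all θ, φ ∈ [0,π] and t ≥ T. -/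
open Real MeasureTheory

/-- Total mass μ_{a,b}(0,π) of the measure (sin(θ/2))^{2a+1}(cos(θ/2))^{2b+1} dθ. -/
noncomputable def muab (a b : ℝ) : ℝ :=
  ∫ θ in Set.Icc (0 : ℝ) π, (Real.sin (θ/2)) ^ (2 * a + 1) * (Real.cos (θ/2)) ^ (2 * b + 1)

/-- The constant c_{α,β} = 2^{-α-β-1}/μ_{α,β}(0,π). -/
noncomputable def cab (a b : ℝ) : ℝ := (2 : ℝ) ^ (-a - b - 1) / muab a b

/-- q(θ,φ,u,v) = 1 - u sin(θ/2)sin(φ/2) - v cos(θ/2)cos(φ/2). -/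
noncomputable def qfun (θ φ u v : ℝ) : ℝ :=
  1 - u * Real.sin (θ/2) * Real.sin (φ/2) - v * Real.cos (θ/2) * Real.cos (φ/2)

/-- The Poisson–Jacobi kernel ℋ_t^{(α,β)}, via its integral representation. -/
noncomputable def poissonJacobi (a b : ℝ) (t θ φ : ℝ) : ℝ :=
  cab a b * Real.sinh (t/2) *
    ∫ u, (∫ v, (Real.cosh (t/2) - 1 + qfun θ φ u v) ^ (-(a + b + 2)) ∂(jacobiPi b))
      ∂(jacobiPi a)



lemma jacobiPi_props (ν : ℝ) (hν : -1/2 ≤ ν) :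
    (∀ᵐ s ∂jacobiPi ν, s ∈ Set.Icc (-1:ℝ) 1) ∧ jacobiPi ν Set.univ ≠ ⊤ ∧
      jacobiPi ν Set.univ ≠ 0 := by
  by_cases h : ν = -1/2
  · unfold jacobiPi
    rw [if_pos h]
    refine ⟨?_, ?_, ?_⟩
    · rw [ae_iff]
      have : {s : ℝ | ¬ s ∈ Set.Icc (-1:ℝ) 1} = (Set.Icc (-1:ℝ) 1)ᶜ := rfl
      rw [this]
      simp [Measure.dirac_apply' _ measurableSet_Icc.compl, Set.indicator,
        Set.mem_compl_iff]
    · simp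
    · simp
  · have hν' : -1/2 < ν := lt_of_le_of_ne hν (Ne.symm h)
    set K : ℝ := Real.Gamma (ν + 1) / (Real.sqrt π * Real.Gamma (ν + 1/2)) with hKdef
    set p : ℝ := ν - 1/2 with hpdef
    have hK : 0 < K := by
      apply div_pos (Real.Gamma_pos_of_pos (by linarith))
      exact mul_pos (Real.sqrt_pos.mpr Real.pi_pos) (Real.Gamma_pos_of_pos (by linarith))
    have hp : -1 < p := by simp only [hpdef]; linarith
    set ρ : Measure ℝ := volume.restrict (Set.Icc (-1:ℝ) 1) with hρdef
    have hmeas : Measurable fun s : ℝ => K * (1 - s ^ 2) ^ p := by fun_prop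
    -- integrability of the density
    have hint : Integrable (fun s : ℝ => K * (1 - s ^ 2) ^ p) ρ := by
      by_cases hp0 : 0 ≤ p
      · refine (integrable_const K).mono' hmeas.aestronglyMeasurable ?_
        filter_upwards [ae_restrict_mem measurableSet_Icc] with s hs
        have h1 : (0:ℝ) ≤ 1 - s ^ 2 := by nlinarith [hs.1, hs.2]
        have h2 : (1:ℝ) - s ^ 2 ≤ 1 := by nlinarith [sq_nonneg s]
        rw [Real.norm_eq_abs, abs_of_nonneg (mul_nonneg hK.le (Real.rpow_nonneg h1 p))]
        calc K * (1 - s ^ 2) ^ p ≤ K * 1 := by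
              exact mul_le_mul_of_nonneg_left (Real.rpow_le_one h1 h2 hp0) hK.le
          _ = K := mul_one K
      · push_neg at hp0
        have h1 : IntervalIntegrable (fun x : ℝ => x ^ p) volume 0 2 :=
          intervalIntegral.intervalIntegrable_rpow' hp
        have h2 : IntegrableOn (fun s : ℝ => (1 - s) ^ p) (Set.Icc (-1:ℝ) 1) volume := by
          have := (h1.comp_sub_left 1).symm
          norm_num at this
          exact (intervalIntegrable_iff_integrableOn_Icc_of_le (by norm_num)).mp this
        have h3 : IntegrableOn (fun s : ℝ => (1 + s) ^ p) (Set.Icc (-1:ℝ) 1) volume := by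
          have := h1.comp_add_left 1
          norm_num at this
          exact (intervalIntegrable_iff_integrableOn_Icc_of_le (by norm_num)).mp this
        have hg : Integrable (fun s : ℝ => K * ((1 - s) ^ p + (1 + s) ^ p)) ρ :=
          ((h2.add h3).const_mul K)
        refine hg.mono' hmeas.aestronglyMeasurable ?_
        filter_upwards [ae_restrict_mem measurableSet_Icc] with s hs
        have hs1 : -1 ≤ s := hs.1
        have hs2 : s ≤ 1 := hs.2
        rw [Real.norm_eq_abs, abs_of_nonneg (mul_nonneg hK.le (Real.rpow_nonneg (by nlinarith) p))]
        have key : (1 - s ^ 2) ^ p ≤ (1 - s) ^ p + (1 + s) ^ p := by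
          rcases eq_or_lt_of_le hs2 with rfl | hs2'
          · rw [show (1:ℝ) - 1 ^ 2 = 0 by norm_num, Real.zero_rpow (by linarith)]
            exact add_nonneg (Real.rpow_nonneg (by norm_num) p) (Real.rpow_nonneg (by norm_num) p)
          rcases eq_or_lt_of_le hs1 with rfl | hs1'
          · rw [show (1:ℝ) - (-1) ^ 2 = 0 by norm_num, Real.zero_rpow (by linarith)]
            exact add_nonneg (Real.rpow_nonneg (by norm_num) p) (Real.rpow_nonneg (by norm_num) p)
          rcases le_or_gt 0 s with hs0 | hs0
          · have : (1 - s ^ 2) ^ p ≤ (1 - s) ^ p :=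
              Real.rpow_le_rpow_of_nonpos (by nlinarith) (by nlinarith) hp0.le
            have h4 : (0:ℝ) ≤ (1 + s) ^ p := Real.rpow_nonneg (by linarith) p
            linarith
          · have : (1 - s ^ 2) ^ p ≤ (1 + s) ^ p :=
              Real.rpow_le_rpow_of_nonpos (by nlinarith) (by nlinarith) hp0.le
            have h4 : (0:ℝ) ≤ (1 - s) ^ p := Real.rpow_nonneg (by linarith) p
            linarith
        exact mul_le_mul_of_nonneg_left key hK.le
    have happ : jacobiPi ν Set.univ
        = ∫⁻ s, ENNReal.ofReal (K * (1 - s ^ 2) ^ p) ∂ρ := by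
      unfold jacobiPi
      rw [if_neg h, withDensity_apply _ MeasurableSet.univ, Measure.restrict_univ]
    refine ⟨?_, ?_, ?_⟩
    · unfold jacobiPi
      rw [if_neg h]
      exact Filter.Eventually.filter_mono (Measure.AbsolutelyContinuous.ae_le
        (withDensity_absolutelyContinuous ρ _)) (ae_restrict_mem measurableSet_Icc)
    · rw [happ]
      exact hint.lintegral_lt_top.ne
    · rw [happ]
      set m : ℝ := min ((3/4 : ℝ) ^ p) 1 with hmdef
      have hm : 0 < m := lt_min (Real.rpow_pos_of_pos (by norm_num) p) one_pos
      have hlow : ∀ s ∈ Set.Icc (-(1:ℝ)/2) (1/2), ENNReal.ofReal (K * m)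
          ≤ ENNReal.ofReal (K * (1 - s ^ 2) ^ p) := by
        intro s hs
        apply ENNReal.ofReal_le_ofReal
        apply mul_le_mul_of_nonneg_left _ hK.le
        have h34 : (3/4 : ℝ) ≤ 1 - s ^ 2 := by nlinarith [hs.1, hs.2]
        rcases le_or_gt 0 p with hp0 | hp0
        · exact le_trans (min_le_left _ _) (Real.rpow_le_rpow (by norm_num) h34 hp0)
        · refine le_trans (min_le_right _ _) ?_
          exact Real.one_le_rpow_of_pos_of_le_one_of_nonpos (by linarith)
            (by nlinarith [sq_nonneg s]) hp0.le
      have hS : (Set.Icc (-(1:ℝ)/2) (1/2)) ⊆ Set.Icc (-1:ℝ) 1 := by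
        intro x hx; exact ⟨by linarith [hx.1], by linarith [hx.2]⟩
      have step : ENNReal.ofReal (K * m) * volume (Set.Icc (-(1:ℝ)/2) (1/2))
          ≤ ∫⁻ s, ENNReal.ofReal (K * (1 - s ^ 2) ^ p) ∂ρ := by
        have h1 : ∫⁻ s in Set.Icc (-(1:ℝ)/2) (1/2), ENNReal.ofReal (K * (1 - s ^ 2) ^ p) ∂volume
            ≤ ∫⁻ s, ENNReal.ofReal (K * (1 - s ^ 2) ^ p) ∂ρ := by
          rw [hρdef]
          rw [show (∫⁻ s, ENNReal.ofReal (K * (1 - s ^ 2) ^ p)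
              ∂volume.restrict (Set.Icc (-1:ℝ) 1))
            = ∫⁻ s in Set.Icc (-1:ℝ) 1, ENNReal.ofReal (K * (1 - s ^ 2) ^ p) ∂volume from rfl]
          exact lintegral_mono_set hS
        refine le_trans ?_ h1
        rw [← setLIntegral_const]
        exact setLIntegral_mono' measurableSet_Icc hlow
      intro hzero
      rw [hzero] at step
      simp only [le_zero_iff, mul_eq_zero] at step
      rcases step with h' | h'
      · exact absurd h' (by positivity)
      · rw [Real.volume_Icc] at h'
        simp only [ENNReal.ofReal_eq_zero] at h'
        norm_num at h'


lemma integral_bounds {μ : Measure ℝ} [IsFiniteMeasure μ]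
    (hsupp : ∀ᵐ s ∂μ, s ∈ Set.Icc (-1:ℝ) 1) {f : ℝ → ℝ}
    (hf : AEStronglyMeasurable f μ) {lo hi : ℝ} (hlo : 0 ≤ lo)
    (hbd : ∀ s ∈ Set.Icc (-1:ℝ) 1, lo ≤ f s ∧ f s ≤ hi) :
    lo * (μ Set.univ).toReal ≤ ∫ s, f s ∂μ ∧ (∫ s, f s ∂μ) ≤ hi * (μ Set.univ).toReal := by
  have hint : Integrable f μ := by
    refine (integrable_const hi).mono' hf ?_
    filter_upwards [hsupp] with s hs
    rw [Real.norm_eq_abs, abs_of_nonneg (hlo.trans (hbd s hs).1)]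
    exact (hbd s hs).2
  constructor
  · have : ∫ _ : ℝ, lo ∂μ ≤ ∫ s, f s ∂μ := by
      refine integral_mono_ae (integrable_const lo) hint ?_
      filter_upwards [hsupp] with s hs using (hbd s hs).1
    rwa [integral_const, smul_eq_mul, mul_comm] at this
  · have : ∫ s, f s ∂μ ≤ ∫ _ : ℝ, hi ∂μ := by
      refine integral_mono_ae hint (integrable_const hi) ?_
      filter_upwards [hsupp] with s hs using (hbd s hs).2
    rwa [integral_const, smul_eq_mul, mul_comm] at this


lemma muab_pos (a b : ℝ) (ha : -1/2 ≤ a) (hb : -1/2 ≤ b) : 0 < muab a b := by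
  have hea : 0 ≤ 2 * a + 1 := by linarith
  have heb : 0 ≤ 2 * b + 1 := by linarith
  set f : ℝ → ℝ := fun θ => (Real.sin (θ/2)) ^ (2 * a + 1) * (Real.cos (θ/2)) ^ (2 * b + 1)
    with hfdef
  have hmeas : Measurable f := by fun_prop
  have hbig : IntegrableOn f (Set.Icc (0:ℝ) π) volume := by
    have hone : IntegrableOn (fun _ : ℝ => (1:ℝ)) (Set.Icc (0:ℝ) π) volume :=
      integrableOn_const measure_Icc_lt_top.ne
    refine hone.mono' hmeas.aestronglyMeasurable ?_
    filter_upwards [ae_restrict_mem measurableSet_Icc] with θ hθ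
    have h1 : 0 ≤ θ/2 := by linarith [hθ.1]
    have h2 : θ/2 ≤ π := by linarith [hθ.2, Real.pi_pos]
    have hs0 : 0 ≤ Real.sin (θ/2) := Real.sin_nonneg_of_nonneg_of_le_pi h1 h2
    have hs1 : Real.sin (θ/2) ≤ 1 := Real.sin_le_one _
    have hc1 : Real.cos (θ/2) ≤ 1 := Real.cos_le_one _
    rcases le_or_gt 0 (Real.cos (θ/2)) with hc0 | hc0
    · rw [Real.norm_eq_abs, abs_of_nonneg (mul_nonneg (Real.rpow_nonneg hs0 _)
        (Real.rpow_nonneg hc0 _))]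
      calc Real.sin (θ/2) ^ (2*a+1) * Real.cos (θ/2) ^ (2*b+1)
          ≤ 1 * 1 := mul_le_mul (Real.rpow_le_one hs0 hs1 hea)
            (Real.rpow_le_one hc0 hc1 heb) (Real.rpow_nonneg hc0 _) zero_le_one
        _ = 1 := one_mul 1
    · exfalso
      have : θ/2 ≤ π/2 := by linarith [hθ.2]
      exact absurd (Real.cos_nonneg_of_mem_Icc ⟨by linarith, this⟩) (not_le.mpr hc0)
  have hnonneg : ∀ θ ∈ Set.Icc (0:ℝ) π, 0 ≤ f θ := by
    intro θ hθ
    have h1 : 0 ≤ θ/2 := by linarith [hθ.1]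
    have h2 : θ/2 ≤ π := by linarith [hθ.2, Real.pi_pos]
    exact mul_nonneg (Real.rpow_nonneg (Real.sin_nonneg_of_nonneg_of_le_pi h1 h2) _)
      (Real.rpow_nonneg (Real.cos_nonneg_of_mem_Icc ⟨by linarith, by linarith [hθ.2]⟩) _)
  -- lower bound on the small interval
  have hsub : Set.Icc (π/3) (π/2) ⊆ Set.Icc (0:ℝ) π := by
    intro x hx
    constructor
    · linarith [hx.1, Real.pi_pos]
    · linarith [hx.2, Real.pi_pos]
  have hsmall : IntegrableOn f (Set.Icc (π/3) (π/2)) volume := hbig.mono_set hsub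
  set c0 : ℝ := (1/2 : ℝ) ^ (2*a+1) * (1/2 : ℝ) ^ (2*b+1) with hc0def
  have hc0 : 0 < c0 := mul_pos (Real.rpow_pos_of_pos one_half_pos _)
    (Real.rpow_pos_of_pos one_half_pos _)
  have hflow : ∀ θ ∈ Set.Icc (π/3) (π/2), c0 ≤ f θ := by
    intro θ hθ
    have h1 : π/6 ≤ θ/2 := by linarith [hθ.1]
    have h2 : θ/2 ≤ π/4 := by linarith [hθ.2]
    have hsin : (1/2 : ℝ) ≤ Real.sin (θ/2) := by
      rw [← Real.sin_pi_div_six]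
      apply Real.sin_le_sin_of_le_of_le_pi_div_two (by linarith [Real.pi_pos]) (by
        linarith [Real.pi_pos]) h1
    have hcos : (1/2 : ℝ) ≤ Real.cos (θ/2) := by
      have := Real.cos_pi_div_four
      have h3 : Real.cos (θ/2) ≥ Real.cos (π/4) := by
        apply Real.cos_le_cos_of_nonneg_of_le_pi (by linarith [Real.pi_pos])
          (by linarith [Real.pi_pos]) h2
      have h4 : (1/2 : ℝ) ≤ Real.sqrt 2 / 2 := by
        nlinarith [Real.sq_sqrt (show (0:ℝ) ≤ 2 by norm_num),
          Real.sqrt_nonneg 2]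
      linarith
    exact mul_le_mul (Real.rpow_le_rpow (by norm_num) hsin hea)
      (Real.rpow_le_rpow (by norm_num) hcos heb)
      (Real.rpow_nonneg (by norm_num) _)
      (Real.rpow_nonneg (by linarith) _)
  have hconst : c0 * (volume (Set.Icc (π/3) (π/2))).toReal
      ≤ ∫ θ in Set.Icc (π/3) (π/2), f θ := by
    exact setIntegral_ge_of_const_le_real measurableSet_Icc measure_Icc_lt_top.ne hflow hsmall
  have hmono : ∫ θ in Set.Icc (π/3) (π/2), f θ ≤ ∫ θ in Set.Icc (0:ℝ) π, f θ := by
    apply setIntegral_mono_set hbig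
    · filter_upwards [ae_restrict_mem measurableSet_Icc] with θ hθ using hnonneg θ hθ
    · exact Filter.Eventually.of_forall hsub
  have hvol : (volume (Set.Icc (π/3) (π/2))).toReal = π/6 := by
    rw [Real.volume_Icc, ENNReal.toReal_ofReal (by linarith [Real.pi_pos])]
    ring
  have : 0 < c0 * (volume (Set.Icc (π/3) (π/2))).toReal := by
    rw [hvol]; positivity
  calc (0:ℝ) < c0 * (volume (Set.Icc (π/3) (π/2))).toReal := this
    _ ≤ ∫ θ in Set.Icc (π/3) (π/2), f θ := hconst
    _ ≤ muab a b := hmono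


lemma qfun_bounds {θ φ u v : ℝ} (hθ : θ ∈ Set.Icc (0:ℝ) π) (hφ : φ ∈ Set.Icc (0:ℝ) π)
    (hu : u ∈ Set.Icc (-1:ℝ) 1) (hv : v ∈ Set.Icc (-1:ℝ) 1) :
    0 ≤ qfun θ φ u v ∧ qfun θ φ u v ≤ 2 := by
  have hs1 : 0 ≤ Real.sin (θ/2) :=
    Real.sin_nonneg_of_nonneg_of_le_pi (by linarith [hθ.1]) (by linarith [hθ.2, Real.pi_pos])
  have hs2 : 0 ≤ Real.sin (φ/2) :=
    Real.sin_nonneg_of_nonneg_of_le_pi (by linarith [hφ.1]) (by linarith [hφ.2, Real.pi_pos])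
  have hc1 : 0 ≤ Real.cos (θ/2) :=
    Real.cos_nonneg_of_mem_Icc ⟨by linarith [hθ.1, Real.pi_pos], by linarith [hθ.2]⟩
  have hc2 : 0 ≤ Real.cos (φ/2) :=
    Real.cos_nonneg_of_mem_Icc ⟨by linarith [hφ.1, Real.pi_pos], by linarith [hφ.2]⟩
  have hcs : Real.cos (θ/2 - φ/2) = Real.cos (θ/2) * Real.cos (φ/2)
      + Real.sin (θ/2) * Real.sin (φ/2) := Real.cos_sub (θ/2) (φ/2)
  have hcos1 : Real.cos (θ/2 - φ/2) ≤ 1 := Real.cos_le_one _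
  have hss : 0 ≤ Real.sin (θ/2) * Real.sin (φ/2) := mul_nonneg hs1 hs2
  have hcc : 0 ≤ Real.cos (θ/2) * Real.cos (φ/2) := mul_nonneg hc1 hc2
  unfold qfun
  constructor
  · nlinarith [mul_nonneg (by linarith [hu.2] : (0:ℝ) ≤ 1 - u) hss,
      mul_nonneg (by linarith [hv.2] : (0:ℝ) ≤ 1 - v) hcc]
  · nlinarith [mul_nonneg (by linarith [hu.1] : (0:ℝ) ≤ 1 + u) hss,
      mul_nonneg (by linarith [hv.1] : (0:ℝ) ≤ 1 + v) hcc]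

lemma cosh_lb (T t : ℝ) (hT : 0 < T) (ht : T ≤ t) :
    (1 - Real.exp (-T/2))^2/2 * Real.exp (t/2) ≤ Real.cosh (t/2) - 1 := by
  set X : ℝ := Real.exp (t/2) with hXdef
  set Y : ℝ := Real.exp (-(t/2)) with hYdef
  have hX0 : 0 < X := Real.exp_pos _
  have hY0 : 0 < Y := Real.exp_pos _
  have hXY : X * Y = 1 := by rw [hXdef, hYdef, ← Real.exp_add]; norm_num
  have hYT : Y ≤ Real.exp (-T/2) := Real.exp_le_exp.mpr (by linarith)
  have heT1 : Real.exp (-T/2) < 1 := Real.exp_lt_one_iff.mpr (by linarith)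
  have hsq : (1 - Real.exp (-T/2))^2 ≤ (1 - Y)^2 := by nlinarith
  have hsqX : (1 - Y)^2 * X = X - 2 + Y := by linear_combination (Y - 2) * hXY
  have h1 : (1 - Real.exp (-T/2))^2 * X ≤ (1 - Y)^2 * X :=
    mul_le_mul_of_nonneg_right hsq hX0.le
  rw [Real.cosh_eq]
  nlinarith

lemma cosh_ub (t : ℝ) (ht : 0 ≤ t) : Real.cosh (t/2) + 1 ≤ 2 * Real.exp (t/2) := by
  have hX1 : 1 ≤ Real.exp (t/2) := Real.one_le_exp (by linarith)
  have hYX : Real.exp (-(t/2)) ≤ Real.exp (t/2) := Real.exp_le_exp.mpr (by linarith)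
  rw [Real.cosh_eq]
  linarith

lemma sinh_lb (T t : ℝ) (hT : 0 < T) (ht : T ≤ t) :
    (1 - Real.exp (-T))/2 * Real.exp (t/2) ≤ Real.sinh (t/2) := by
  set X : ℝ := Real.exp (t/2) with hXdef
  set Y : ℝ := Real.exp (-(t/2)) with hYdef
  have hX0 : 0 < X := Real.exp_pos _
  have hXY : X * Y = 1 := by rw [hXdef, hYdef, ← Real.exp_add]; norm_num
  have hYY : Y * Y = Real.exp (-t) := by rw [hYdef, ← Real.exp_add]; congr 1; ring
  have heTt : Real.exp (-t) ≤ Real.exp (-T) := Real.exp_le_exp.mpr (by linarith)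
  have h6 : Real.exp (-t) * X = Y := by rw [← hYY]; linear_combination Y * hXY
  have h7 : Real.exp (-t) * X ≤ Real.exp (-T) * X :=
    mul_le_mul_of_nonneg_right heTt hX0.le
  rw [Real.sinh_eq]
  nlinarith

lemma sinh_ub (t : ℝ) : Real.sinh (t/2) ≤ Real.exp (t/2) := by
  have hY0 : 0 < Real.exp (-(t/2)) := Real.exp_pos _
  have hX0 : 0 < Real.exp (t/2) := Real.exp_pos _
  rw [Real.sinh_eq]
  linarith

set_option maxHeartbeats 1000000 in
/-- Theorem A.1 (large time part): for α, β ≥ -1/2 and t ≥ T, uniformly in θ, φ ∈ [0,π],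
ℋ_t^{(α,β)}(θ,φ) ≃ exp(-t(α+β+1)/2). -/
theorem stmt19 (a b T : ℝ) (ha : -1/2 ≤ a) (hb : -1/2 ≤ b) (hT : 0 < T) :
    ∃ c C : ℝ, 0 < c ∧ 0 < C ∧ ∀ θ φ t : ℝ, θ ∈ Set.Icc 0 π → φ ∈ Set.Icc 0 π → T ≤ t →
      c * Real.exp (-t * (a + b + 1) / 2) ≤ poissonJacobi a b t θ φ ∧
      poissonJacobi a b t θ φ ≤ C * Real.exp (-t * (a + b + 1) / 2) := by
  obtain ⟨hsa, hfina, h0a⟩ := jacobiPi_props a ha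
  obtain ⟨hsb, hfinb, h0b⟩ := jacobiPi_props b hb
  haveI : IsFiniteMeasure (jacobiPi a) := ⟨lt_top_iff_ne_top.mpr hfina⟩
  haveI : IsFiniteMeasure (jacobiPi b) := ⟨lt_top_iff_ne_top.mpr hfinb⟩
  set Ma : ℝ := (jacobiPi a Set.univ).toReal with hMadef
  set Mb : ℝ := (jacobiPi b Set.univ).toReal with hMbdef
  have hMa : 0 < Ma := ENNReal.toReal_pos h0a hfina
  have hMb : 0 < Mb := ENNReal.toReal_pos h0b hfinb
  have hcab : 0 < cab a b :=
    div_pos (Real.rpow_pos_of_pos two_pos _) (muab_pos a b ha hb)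
  set e : ℝ := -(a + b + 2) with hedef
  have he0 : e ≤ 0 := by rw [hedef]; linarith
  have heT1 : Real.exp (-T/2) < 1 := Real.exp_lt_one_iff.mpr (by linarith)
  have heT2 : Real.exp (-T) < 1 := Real.exp_lt_one_iff.mpr (by linarith)
  have hKT : 0 < (1 - Real.exp (-T/2))^2/2 := by
    apply div_pos _ two_pos; exact pow_pos (by linarith) 2
  have hP : 0 < ((1 - Real.exp (-T/2))^2/2) ^ e := Real.rpow_pos_of_pos hKT e
  have hQ : 0 < (1 - Real.exp (-T))/2 * (2:ℝ) ^ e :=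
    mul_pos (by linarith) (Real.rpow_pos_of_pos two_pos e)
  refine ⟨cab a b * Mb * Ma * ((1 - Real.exp (-T))/2 * (2:ℝ) ^ e),
    cab a b * Mb * Ma * ((1 - Real.exp (-T/2))^2/2) ^ e, by positivity, by positivity, ?_⟩
  intro θ φ t hθ hφ ht
  have ht0 : 0 < t := lt_of_lt_of_le hT ht
  have hS : 0 < Real.sinh (t/2) := Real.sinh_pos_iff.mpr (by linarith)
  have hch1 : 1 < Real.cosh (t/2) := Real.one_lt_cosh.mpr (by positivity)
  set lo : ℝ := (Real.cosh (t/2) + 1) ^ e with hlodef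
  set hi : ℝ := (Real.cosh (t/2) - 1) ^ e with hhidef
  have hlo0 : 0 < lo := Real.rpow_pos_of_pos (by linarith) e
  have hhi0 : 0 < hi := Real.rpow_pos_of_pos (by linarith) e
  -- pointwise bounds on the integrand
  have hfb : ∀ u ∈ Set.Icc (-1:ℝ) 1, ∀ v ∈ Set.Icc (-1:ℝ) 1,
      lo ≤ (Real.cosh (t/2) - 1 + qfun θ φ u v) ^ e ∧
      (Real.cosh (t/2) - 1 + qfun θ φ u v) ^ e ≤ hi := by
    intro u hu v hv
    obtain ⟨hq0, hq2⟩ := qfun_bounds hθ hφ hu hv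
    constructor
    · exact Real.rpow_le_rpow_of_nonpos (by linarith) (by linarith) he0
    · exact Real.rpow_le_rpow_of_nonpos (by linarith) (by linarith) he0
  -- inner integral bounds
  have hinner : ∀ u ∈ Set.Icc (-1:ℝ) 1,
      lo * Mb ≤ (∫ v, (Real.cosh (t/2) - 1 + qfun θ φ u v) ^ e ∂jacobiPi b) ∧
      (∫ v, (Real.cosh (t/2) - 1 + qfun θ φ u v) ^ e ∂jacobiPi b) ≤ hi * Mb := by
    intro u hu
    have hm : Measurable fun v => (Real.cosh (t/2) - 1 + qfun θ φ u v) ^ e := by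
      have : Measurable fun v => Real.cosh (t/2) - 1 + qfun θ φ u v := by
        unfold qfun; fun_prop
      exact this.pow measurable_const
    exact integral_bounds hsb hm.aestronglyMeasurable hlo0.le (fun v hv => hfb u hu v hv)
  -- outer integral bounds
  have hFm : Measurable (fun p : ℝ × ℝ => (Real.cosh (t/2) - 1 + qfun θ φ p.1 p.2) ^ e) := by
    have : Measurable fun p : ℝ × ℝ => Real.cosh (t/2) - 1 + qfun θ φ p.1 p.2 := by
      unfold qfun; fun_prop
    exact this.pow measurable_const
  have hgm : AEStronglyMeasurable
      (fun u => ∫ v, (Real.cosh (t/2) - 1 + qfun θ φ u v) ^ e ∂jacobiPi b) (jacobiPi a) :=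
    (hFm.stronglyMeasurable.integral_prod_right').aestronglyMeasurable
  have houter := integral_bounds hsa hgm (mul_nonneg hlo0.le hMb.le) hinner
  set I : ℝ := ∫ u, (∫ v, (Real.cosh (t/2) - 1 + qfun θ φ u v) ^ e ∂jacobiPi b) ∂jacobiPi a
    with hIdef
  -- exponential identity
  have hE : Real.exp (t/2) * Real.exp (t/2 * e) = Real.exp (-t * (a + b + 1) / 2) := by
    rw [← Real.exp_add, hedef]
    congr 1
    ring
  -- upper key
  have keyU : Real.sinh (t/2) * hi
      ≤ ((1 - Real.exp (-T/2))^2/2) ^ e * Real.exp (-t * (a + b + 1) / 2) := by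
    have h2 : hi ≤ ((1 - Real.exp (-T/2))^2/2 * Real.exp (t/2)) ^ e :=
      Real.rpow_le_rpow_of_nonpos (mul_pos hKT (Real.exp_pos _)) (cosh_lb T t hT ht) he0
    have h3 : ((1 - Real.exp (-T/2))^2/2 * Real.exp (t/2)) ^ e
        = ((1 - Real.exp (-T/2))^2/2) ^ e * Real.exp (t/2 * e) := by
      rw [Real.mul_rpow hKT.le (Real.exp_pos _).le, ← Real.exp_mul]
    calc Real.sinh (t/2) * hi
        ≤ Real.exp (t/2) * (((1 - Real.exp (-T/2))^2/2) ^ e * Real.exp (t/2 * e)) := by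
          rw [← h3]
          exact mul_le_mul (sinh_ub t) h2 hhi0.le (Real.exp_pos _).le
      _ = ((1 - Real.exp (-T/2))^2/2) ^ e * (Real.exp (t/2) * Real.exp (t/2 * e)) := by ring
      _ = ((1 - Real.exp (-T/2))^2/2) ^ e * Real.exp (-t * (a + b + 1) / 2) := by rw [hE]
  -- lower key
  have keyL : (1 - Real.exp (-T))/2 * (2:ℝ) ^ e * Real.exp (-t * (a + b + 1) / 2)
      ≤ Real.sinh (t/2) * lo := by
    have h2 : (2 * Real.exp (t/2)) ^ e ≤ lo :=
      Real.rpow_le_rpow_of_nonpos (by linarith) (cosh_ub t ht0.le) he0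
    have h3 : (2 * Real.exp (t/2)) ^ e = (2:ℝ) ^ e * Real.exp (t/2 * e) := by
      rw [Real.mul_rpow (by norm_num) (Real.exp_pos _).le, ← Real.exp_mul]
    calc (1 - Real.exp (-T))/2 * (2:ℝ) ^ e * Real.exp (-t * (a + b + 1) / 2)
        = ((1 - Real.exp (-T))/2 * Real.exp (t/2)) * ((2:ℝ) ^ e * Real.exp (t/2 * e)) := by
          rw [← hE]; ring
      _ = ((1 - Real.exp (-T))/2 * Real.exp (t/2)) * ((2 * Real.exp (t/2)) ^ e) := by rw [h3]
      _ ≤ Real.sinh (t/2) * lo := by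
          refine mul_le_mul (sinh_lb T t hT ht) h2 ?_ hS.le
          positivity
  -- assemble
  have hpj : poissonJacobi a b t θ φ = cab a b * Real.sinh (t/2) * I := by
    rw [poissonJacobi, hIdef, hedef]
  constructor
  · calc cab a b * Mb * Ma * ((1 - Real.exp (-T))/2 * (2:ℝ) ^ e)
          * Real.exp (-t * (a + b + 1) / 2)
        = ((1 - Real.exp (-T))/2 * (2:ℝ) ^ e * Real.exp (-t * (a + b + 1) / 2))
          * (cab a b * Mb * Ma) := by ring
      _ ≤ (Real.sinh (t/2) * lo) * (cab a b * Mb * Ma) :=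
          mul_le_mul_of_nonneg_right keyL (by positivity)
      _ = cab a b * Real.sinh (t/2) * (lo * Mb * Ma) := by ring
      _ ≤ cab a b * Real.sinh (t/2) * I :=
          mul_le_mul_of_nonneg_left houter.1 (by positivity)
      _ = poissonJacobi a b t θ φ := hpj.symm
  · calc poissonJacobi a b t θ φ = cab a b * Real.sinh (t/2) * I := hpj
      _ ≤ cab a b * Real.sinh (t/2) * (hi * Mb * Ma) :=
          mul_le_mul_of_nonneg_left houter.2 (by positivity)
      _ = (Real.sinh (t/2) * hi) * (cab a b * Mb * Ma) := by ring
      _ ≤ (((1 - Real.exp (-T/2))^2/2) ^ e * Real.exp (-t * (a + b + 1) / 2))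
          * (cab a b * Mb * Ma) :=
          mul_le_mul_of_nonneg_right keyU (by positivity)
      _ = cab a b * Mb * Ma * ((1 - Real.exp (-T/2))^2/2) ^ e
          * Real.exp (-t * (a + b + 1) / 2) := by ring
end
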